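/- arXiv:1809.07107 — 5 statements merged into one kernel-verified Lean document; each statement's English description precedes it below -/
import Mathlib

section
/- Let T > 0, u ∈ L¹([0,T];ℝ) and ψ₀ ∈ 𝒳, and let Φᵘ(·)ψ₀ denote the unique mild solution on [0,T] of the bilinear control system with initial value ψ₀ and control u. Then for every t ∈ [0,T] the Dyson expansion holds: Φᵘ(t)ψ₀ = Σ_{j=0}^∞ Z^j_t ψ₀, the series converging in 𝒳. -/
open MeasureTheory Set

variable {X : Type*} [NormedAddCommGroup X] [NormedSpace ℝ X] [CompleteSpace X]

/-- `ψ` is a mild solution on `[0, T]` of `ψ' = Aψ + u(t)Bψ + K(ψ)`, `ψ(0) = ψ₀`,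
where `A` generates the semigroup `S`. -/
def IsMildSolution (S : ℝ → X →L[ℝ] X) (B : X →L[ℝ] X) (K : X → X)
    (u : ℝ → ℝ) (ψ₀ : X) (T : ℝ) (ψ : ℝ → X) : Prop :=
  ∀ t ∈ Icc (0:ℝ) T,
    ψ t = S t ψ₀ + (∫ s in (0:ℝ)..t, u s • S (t - s) (B (ψ s)))
        + (∫ s in (0:ℝ)..t, S (t - s) (K (ψ s)))

open Filter

set_option maxHeartbeats 2000000

/-- the Dyson expansion of the (unique, continuous) mild solution:
`Φᵘ(t)ψ₀ = Σ_{j=0}^∞ Z^j_t ψ₀`, the series converging in `X`, for every `t ∈ [0,T]`. -/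
theorem dyson_expansion_of_mildSolution
    (S : ℝ → X →L[ℝ] X)
    (hS0 : S 0 = ContinuousLinearMap.id ℝ X)
    (hSadd : ∀ s t : ℝ, 0 ≤ s → 0 ≤ t → S (s + t) = (S s).comp (S t))
    (hScont : ∀ x : X, ContinuousOn (fun t => S t x) (Ici (0:ℝ)))
    (M ω : ℝ) (hM : 0 < M) (hω : 0 ≤ ω)
    (hSbound : ∀ t : ℝ, 0 ≤ t → ‖S t‖ ≤ M * Real.exp (ω * t))
    (B : X →L[ℝ] X) (K : X → X) (k : NNReal) (hk : 0 < k) (hK : LipschitzWith k K)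
    (T : ℝ) (hT : 0 < T)
    (u : ℝ → ℝ) (hu : IntegrableOn u (Icc (0:ℝ) T))
    (ψ₀ : X)
    -- `Φ` is the unique (continuous) mild solution with initial value `ψ₀` and control `u`
    (Φ : ℝ → X)
    (hΦcont : ContinuousOn Φ (Icc (0:ℝ) T))
    (hΦ : IsMildSolution S B K u ψ₀ T Φ)
    -- the Picard/Dyson iterates `Y p t = Y^p_t ψ₀`
    (Y : ℕ → ℝ → X)
    (hY0 : ∀ t : ℝ, Y 0 t = 0)
    (hYrec : ∀ p : ℕ, ∀ t : ℝ, 0 ≤ t →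
      Y (p + 1) t = S t ψ₀ + ∫ s in (0:ℝ)..t,
        (u s • S (t - s) (B (Y p s)) + S (t - s) (K (Y p s)))) :
    ∀ t ∈ Icc (0:ℝ) T, HasSum (fun j : ℕ => Y (j + 1) t - Y j t) (Φ t) := by
  -- basic constants
  set C₀ : ℝ := M * Real.exp (ω * T) with hC₀def
  have hC₀pos : 0 < C₀ := mul_pos hM (Real.exp_pos _)
  have hSle : ∀ τ : ℝ, 0 ≤ τ → τ ≤ T → ∀ x : X, ‖S τ x‖ ≤ C₀ * ‖x‖ := by
    intro τ h0 hτT x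
    refine le_trans ((S τ).le_opNorm x) (mul_le_mul_of_nonneg_right ?_ (norm_nonneg x))
    refine le_trans (hSbound τ h0) (mul_le_mul_of_nonneg_left ?_ hM.le)
    exact Real.exp_le_exp.2 (mul_le_mul_of_nonneg_left hτT hω)
  -- joint continuity of (r, x) ↦ S (max r 0) x
  have hFcont : Continuous (fun q : ℝ × X => S (max q.1 0) q.2) := by
    rw [continuous_iff_continuousAt]
    rintro ⟨r₀, x₀⟩
    have h1 : Continuous fun r : ℝ => S (max r 0) x₀ :=
      (hScont x₀).comp_continuous (continuous_id.max continuous_const)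
        (fun r => le_max_right r 0)
    have key : Tendsto (fun q : ℝ × X => S (max q.1 0) q.2 - S (max r₀ 0) x₀)
        (nhds (r₀, x₀)) (nhds 0) := by
      have hsplit : ∀ q : ℝ × X, S (max q.1 0) q.2 - S (max r₀ 0) x₀
          = S (max q.1 0) (q.2 - x₀) + (S (max q.1 0) x₀ - S (max r₀ 0) x₀) := by
        intro q; rw [map_sub]; abel
      have t1 : Tendsto (fun q : ℝ × X => S (max q.1 0) (q.2 - x₀)) (nhds (r₀, x₀)) (nhds 0) := by
        apply squeeze_zero_norm'
          (a := fun q : ℝ × X => (M * Real.exp (ω * (|r₀| + 1))) * ‖q.2 - x₀‖)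
        · have hev : ∀ᶠ q : ℝ × X in nhds (r₀, x₀), q.1 < |r₀| + 1 :=
            (continuous_fst.tendsto (r₀, x₀)).eventually
              (eventually_lt_nhds (lt_of_le_of_lt (le_abs_self r₀) (by linarith)))
          filter_upwards [hev] with q hq
          refine le_trans ((S (max q.1 0)).le_opNorm _)
            (mul_le_mul_of_nonneg_right ?_ (norm_nonneg _))
          refine le_trans (hSbound _ (le_max_right _ _)) (mul_le_mul_of_nonneg_left ?_ hM.le)
          refine Real.exp_le_exp.2 (mul_le_mul_of_nonneg_left ?_ hω)
          exact max_le hq.le (by positivity)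
        · have : Continuous fun q : ℝ × X => (M * Real.exp (ω * (|r₀| + 1))) * ‖q.2 - x₀‖ := by
            fun_prop
          have := this.tendsto (r₀, x₀)
          simpa using this
      have t2 : Tendsto (fun q : ℝ × X => S (max q.1 0) x₀ - S (max r₀ 0) x₀)
          (nhds (r₀, x₀)) (nhds 0) := by
        have hc : Continuous (fun q : ℝ × X => S (max q.1 0) x₀ - S (max r₀ 0) x₀) :=
          (h1.comp continuous_fst).sub (continuous_const (y := S (max r₀ 0) x₀))
        have := hc.tendsto (r₀, x₀)
        simpa using this
      have := t1.add t2
      simp only [← hsplit] at this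
      simpa using this
    have := key.add (tendsto_const_nhds (x := S (max r₀ 0) x₀))
    simp only [sub_add_cancel, zero_add] at this
    exact this
  -- bound on Φ
  obtain ⟨Cb, hCb⟩ : ∃ Cb : ℝ, ∀ s ∈ Icc (0:ℝ) T, ‖Φ s‖ ≤ Cb :=
    isCompact_Icc.exists_bound_of_continuousOn hΦcont
  have hCb0 : 0 ≤ Cb := le_trans (norm_nonneg _) (hCb 0 ⟨le_rfl, hT.le⟩)
  -- the L¹ weight L
  set L : ℝ → ℝ := fun s => C₀ * (‖B‖ * |u s| + (k:ℝ)) with hLdef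
  have hLnonneg : ∀ s, 0 ≤ L s := by
    intro s
    have : (0:ℝ) ≤ ‖B‖ * |u s| + (k:ℝ) := by positivity
    exact mul_nonneg hC₀pos.le this
  have hLint : IntegrableOn L (Icc 0 T) := by
    apply Integrable.const_mul
    exact (hu.abs.const_mul _).add (integrableOn_const measure_Icc_lt_top.ne)
  have hIocIcc : ∀ t' : ℝ, t' ≤ T → Ioc (0:ℝ) t' ⊆ Icc (0:ℝ) T :=
    fun t' ht' s hs => ⟨hs.1.le, hs.2.trans ht'⟩
  set A : ℝ := ∫ s in Ioc (0:ℝ) T, L s with hAdef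
  have hA0 : 0 ≤ A := setIntegral_nonneg measurableSet_Ioc (fun s _ => hLnonneg s)
  -- small-increment bound for the primitive of L
  have hA'cont : ContinuousOn (fun x => ∫ s in Ioc (0:ℝ) x, L s) (Icc 0 T) :=
    intervalIntegral.continuousOn_primitive hLint
  obtain ⟨δ, hδpos, hδ⟩ :=
    (Metric.uniformContinuousOn_iff.1
      (isCompact_Icc.uniformContinuousOn_of_continuous hA'cont)) (1/2) (by norm_num)
  have hchunk : ∀ a b : ℝ, 0 ≤ a → a ≤ b → b ≤ T → b - a < δ →
      ∫ s in Ioc a b, L s ≤ 1/2 := by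
    intro a b ha hab hbT hd
    have hIa : IntegrableOn L (Ioc 0 a) := hLint.mono_set (hIocIcc a (hab.trans hbT))
    have hIab : IntegrableOn L (Ioc a b) :=
      hLint.mono_set (fun s hs => ⟨ha.trans hs.1.le, hs.2.trans hbT⟩)
    have hsplit : (∫ s in Ioc (0:ℝ) b, L s) = (∫ s in Ioc (0:ℝ) a, L s) + ∫ s in Ioc a b, L s := by
      rw [← Set.Ioc_union_Ioc_eq_Ioc ha hab,
        MeasureTheory.setIntegral_union (Set.Ioc_disjoint_Ioc_of_le le_rfl) measurableSet_Ioc hIa hIab]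
    have hd2 := hδ a ⟨ha, hab.trans hbT⟩ b ⟨ha.trans hab, hbT⟩
      (by rw [Real.dist_eq, abs_sub_comm, abs_of_nonneg (by linarith)]; exact hd)
    rw [Real.dist_eq] at hd2
    have := le_abs_self ((∫ s in Ioc (0:ℝ) a, L s) - ∫ s in Ioc (0:ℝ) b, L s)
    have h3 : (∫ s in Ioc a b, L s) = (∫ s in Ioc (0:ℝ) b, L s) - ∫ s in Ioc (0:ℝ) a, L s := by
      linarith [hsplit]
    rw [h3]
    have := neg_abs_le ((∫ s in Ioc (0:ℝ) a, L s) - ∫ s in Ioc (0:ℝ) b, L s)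
    linarith
  -- grid
  set N : ℕ := ⌈T / δ⌉₊ + 1 with hNdef
  have hNpos : 0 < (N:ℝ) := by positivity
  set δ' : ℝ := T / N with hδ'def
  have hδ'pos : 0 < δ' := div_pos hT hNpos
  have hδ'lt : δ' < δ := by
    rw [hδ'def, div_lt_iff₀ hNpos]
    have h1 : T / δ < (N:ℝ) := lt_of_le_of_lt (Nat.le_ceil _) (by exact_mod_cast Nat.lt_succ_self _)
    calc T = (T / δ) * δ := by field_simp
    _ < (N:ℝ) * δ := by exact mul_lt_mul_of_pos_right h1 hδpos
    _ = δ * N := mul_comm _ _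
  have hTN : T = (N:ℝ) * δ' := by rw [hδ'def]; field_simp
  set c : ℝ := 1 + 2 * A with hcdef
  have hc0 : (0:ℝ) ≤ c := by simp only [hcdef]; linarith
  have hc1 : (1:ℝ) ≤ c := by simp only [hcdef]; linarith
  have hc2A : 2 * A ≤ c := by simp only [hcdef]; linarith
  -- measurability and integrability helpers (independent of the iteration step)
  have huabs : IntegrableOn (fun s => |u s|) (Icc 0 T) := hu.abs
  have humeas : AEStronglyMeasurable u (volume.restrict (Ioc 0 T)) :=
    hu.aestronglyMeasurable.mono_measure (Measure.restrict_mono Ioc_subset_Icc_self le_rfl)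
  have hΦmeas : AEStronglyMeasurable Φ (volume.restrict (Ioc 0 T)) :=
    (hΦcont.aestronglyMeasurable measurableSet_Icc).mono_measure
      (Measure.restrict_mono Ioc_subset_Icc_self le_rfl)
  have hKnorm : ∀ (x : X) (R : ℝ), ‖x‖ ≤ R → ‖K x‖ ≤ ‖K 0‖ + (k:ℝ) * R := by
    intro x R hx
    have h1 : ‖K x - K 0‖ ≤ (k:ℝ) * ‖x - 0‖ := hK.norm_sub_le _ _
    rw [sub_zero] at h1
    have h3 : ‖K x‖ ≤ ‖K 0‖ + ‖K x - K 0‖ := by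
      have := norm_add_le (K 0) (K x - K 0); simpa using this
    have h4 : (k:ℝ) * ‖x‖ ≤ (k:ℝ) * R := mul_le_mul_of_nonneg_left hx k.coe_nonneg
    linarith
  have hmeasS : ∀ t' ∈ Icc (0:ℝ) T, ∀ v : ℝ → X,
      AEStronglyMeasurable v (volume.restrict (Ioc 0 T)) →
      AEStronglyMeasurable (fun s => S (t' - s) (v s)) (volume.restrict (Ioc 0 t')) := by
    intro t' ht' v hv
    have hv' : AEStronglyMeasurable v (volume.restrict (Ioc 0 t')) :=
      hv.mono_measure (Measure.restrict_mono (Ioc_subset_Ioc_right ht'.2) le_rfl)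
    have h1 : AEStronglyMeasurable (fun s => S (max (t' - s) 0) (v s))
        (volume.restrict (Ioc 0 t')) :=
      hFcont.comp_aestronglyMeasurable
        (((continuous_const.sub continuous_id).aestronglyMeasurable).prodMk hv')
    refine h1.congr ?_
    filter_upwards [ae_restrict_mem measurableSet_Ioc] with s hs
    rw [max_eq_left (by linarith [hs.2] : (0:ℝ) ≤ t' - s)]
  have hIntB : ∀ t' ∈ Icc (0:ℝ) T, ∀ (v : ℝ → X) (R : ℝ),
      AEStronglyMeasurable v (volume.restrict (Ioc 0 T)) →
      (∀ s ∈ Icc (0:ℝ) T, ‖v s‖ ≤ R) →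
      IntegrableOn (fun s => u s • S (t' - s) (B (v s))) (Ioc 0 t') := by
    intro t' ht' v R hv hvR
    have hBv : AEStronglyMeasurable (fun s => B (v s)) (volume.restrict (Ioc 0 T)) :=
      B.continuous.comp_aestronglyMeasurable hv
    have hu' : AEStronglyMeasurable u (volume.restrict (Ioc 0 t')) :=
      humeas.mono_measure (Measure.restrict_mono (Ioc_subset_Ioc_right ht'.2) le_rfl)
    refine Integrable.mono' (g := fun s => |u s| * (C₀ * (‖B‖ * R))) ?_ ?_ ?_
    · exact (huabs.mono_set (hIocIcc t' ht'.2)).mul_const _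
    · exact hu'.smul (hmeasS t' ht' _ hBv)
    · filter_upwards [ae_restrict_mem measurableSet_Ioc] with s hs
      rw [norm_smul, Real.norm_eq_abs]
      refine mul_le_mul_of_nonneg_left ?_ (abs_nonneg _)
      calc ‖S (t' - s) (B (v s))‖ ≤ C₀ * ‖B (v s)‖ :=
            hSle _ (by linarith [hs.2]) (by linarith [hs.1, ht'.2]) _
        _ ≤ C₀ * (‖B‖ * R) := by
            refine mul_le_mul_of_nonneg_left ?_ hC₀pos.le
            calc ‖B (v s)‖ ≤ ‖B‖ * ‖v s‖ := B.le_opNorm _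
              _ ≤ ‖B‖ * R := mul_le_mul_of_nonneg_left (hvR s (hIocIcc t' ht'.2 hs)) (norm_nonneg _)
  have hIntK : ∀ t' ∈ Icc (0:ℝ) T, ∀ (v : ℝ → X) (R : ℝ),
      AEStronglyMeasurable v (volume.restrict (Ioc 0 T)) →
      (∀ s ∈ Icc (0:ℝ) T, ‖v s‖ ≤ R) →
      IntegrableOn (fun s => S (t' - s) (K (v s))) (Ioc 0 t') := by
    intro t' ht' v R hv hvR
    have hKv : AEStronglyMeasurable (fun s => K (v s)) (volume.restrict (Ioc 0 T)) :=
      hK.continuous.comp_aestronglyMeasurable hv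
    refine Integrable.mono' (g := fun _ => C₀ * (‖K 0‖ + (k:ℝ) * R)) ?_ ?_ ?_
    · exact integrableOn_const measure_Ioc_lt_top.ne
    · exact hmeasS t' ht' _ hKv
    · filter_upwards [ae_restrict_mem measurableSet_Ioc] with s hs
      calc ‖S (t' - s) (K (v s))‖ ≤ C₀ * ‖K (v s)‖ :=
            hSle _ (by linarith [hs.2]) (by linarith [hs.1, ht'.2]) _
        _ ≤ C₀ * (‖K 0‖ + (k:ℝ) * R) :=
            mul_le_mul_of_nonneg_left (hKnorm _ _ (hvR s (hIocIcc t' ht'.2 hs))) hC₀pos.le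
  -- the main induction: measurability of `Y p` and the quantitative bound
  have main : ∀ p : ℕ,
      AEStronglyMeasurable (Y p) (volume.restrict (Ioc 0 T)) ∧
      ∀ j : ℕ, ∀ s ∈ Icc (0:ℝ) T, s ≤ (j:ℝ) * δ' →
        ‖Y p s - Φ s‖ ≤ Cb * c ^ j * ((p:ℝ) + 1) ^ j * (1/2 : ℝ) ^ p := by
    intro p
    induction p with
    | zero =>
      constructor
      · have hfun : Y 0 = fun _ => (0:X) := funext hY0
        rw [hfun]; exact aestronglyMeasurable_const
      · intro j s hs _
        rw [hY0 s, zero_sub, norm_neg]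
        have h1 : ‖Φ s‖ ≤ Cb := hCb s hs
        have h2 : Cb ≤ Cb * c ^ j := le_mul_of_one_le_right hCb0 (one_le_pow₀ hc1)
        simpa using h1.trans h2
    | succ p ih =>
      obtain ⟨hmeas, hbd⟩ := ih
      set Rp : ℝ := Cb + Cb * c ^ N * ((p:ℝ) + 1) ^ N with hRpdef
      have hYpbound : ∀ s ∈ Icc (0:ℝ) T, ‖Y p s‖ ≤ Rp := by
        intro s hs
        have h1 := hbd N s hs (by rw [← hTN]; exact hs.2)
        have h2 : ‖Y p s‖ ≤ ‖Φ s‖ + ‖Y p s - Φ s‖ := by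
          have := norm_add_le (Φ s) (Y p s - Φ s); simpa using this
        have h3 : (1/2:ℝ)^p ≤ 1 := pow_le_one₀ (by norm_num) (by norm_num)
        have hx0 : (0:ℝ) ≤ Cb * c ^ N * ((p:ℝ) + 1) ^ N :=
          mul_nonneg (mul_nonneg hCb0 (pow_nonneg hc0 _)) (pow_nonneg (by positivity) _)
        have h4 : Cb * c ^ N * ((p:ℝ)+1)^N * (1/2:ℝ)^p ≤ Cb * c^N * ((p:ℝ)+1)^N :=
          mul_le_of_le_one_right hx0 h3
        calc ‖Y p s‖ ≤ ‖Φ s‖ + ‖Y p s - Φ s‖ := h2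
          _ ≤ Cb + Cb * c ^ N * ((p:ℝ) + 1) ^ N := add_le_add (hCb s hs) (h1.trans h4)
      -- continuity (hence measurability) of `Y (p+1)`
      set G : ℝ → ℝ → X := fun t' s =>
        u s • S (max (t' - s) 0) (B (Y p s)) + S (max (t' - s) 0) (K (Y p s)) with hGdef
      have hGmeas : ∀ t' : ℝ, AEStronglyMeasurable (G t') (volume.restrict (Ioc 0 T)) := by
        intro t'
        simp only [hGdef]
        have h1 : AEStronglyMeasurable (fun s => S (max (t' - s) 0) (B (Y p s)))
            (volume.restrict (Ioc 0 T)) :=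
          hFcont.comp_aestronglyMeasurable
            (((continuous_const.sub continuous_id).aestronglyMeasurable).prodMk
              (B.continuous.comp_aestronglyMeasurable hmeas))
        have h2 : AEStronglyMeasurable (fun s => S (max (t' - s) 0) (K (Y p s)))
            (volume.restrict (Ioc 0 T)) :=
          hFcont.comp_aestronglyMeasurable
            (((continuous_const.sub continuous_id).aestronglyMeasurable).prodMk
              (hK.continuous.comp_aestronglyMeasurable hmeas))
        exact (humeas.smul h1).add h2
      have hrepr : ∀ t' ∈ Icc (0:ℝ) T, Y (p+1) t'
          = S (max t' 0) ψ₀ + ∫ s in Ioc (0:ℝ) T, (Ioc (0:ℝ) t').indicator (G t') s := by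
        intro t' ht'
        rw [hYrec p t' ht'.1, max_eq_left ht'.1]
        congr 1
        rw [setIntegral_indicator measurableSet_Ioc]
        have hinter : Ioc (0:ℝ) T ∩ Ioc (0:ℝ) t' = Ioc (0:ℝ) t' := by
          rw [Set.Ioc_inter_Ioc]
          simp [min_eq_right ht'.2]
        rw [hinter, intervalIntegral.integral_of_le ht'.1]
        refine setIntegral_congr_fun measurableSet_Ioc ?_
        intro s hs
        simp only [hGdef]
        rw [max_eq_left (by linarith [hs.2] : (0:ℝ) ≤ t' - s)]
      have hYcont : ContinuousOn (Y (p+1)) (Icc 0 T) := by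
        intro t₀ ht₀
        have hbnd : Integrable
            (fun s => |u s| * (C₀ * (‖B‖ * Rp)) + C₀ * (‖K 0‖ + (k:ℝ) * Rp))
            (volume.restrict (Ioc 0 T)) :=
          ((huabs.mono_set Ioc_subset_Icc_self).mul_const _).add
            (integrableOn_const measure_Ioc_lt_top.ne)
        have hIlim : Tendsto (fun t' : ℝ => ∫ s in Ioc (0:ℝ) T, (Ioc (0:ℝ) t').indicator (G t') s)
            (nhdsWithin t₀ (Icc 0 T))
            (nhds (∫ s in Ioc (0:ℝ) T, (Ioc (0:ℝ) t₀).indicator (G t₀) s)) := by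
          refine tendsto_integral_filter_of_dominated_convergence
            (fun s => |u s| * (C₀ * (‖B‖ * Rp)) + C₀ * (‖K 0‖ + (k:ℝ) * Rp)) ?_ ?_ hbnd ?_
          · exact Eventually.of_forall (fun t' => (hGmeas t').indicator measurableSet_Ioc)
          · filter_upwards [self_mem_nhdsWithin] with t' ht'
            filter_upwards [ae_restrict_mem measurableSet_Ioc] with s hs
            by_cases hmem : s ∈ Ioc (0:ℝ) t'
            · rw [Set.indicator_of_mem hmem]
              simp only [hGdef]
              have h0 : 0 ≤ max (t' - s) 0 := le_max_right _ _
              have hTT : max (t' - s) 0 ≤ T := max_le (by linarith [hs.1, ht'.2]) hT.le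
              refine le_trans (norm_add_le _ _) (add_le_add ?_ ?_)
              · rw [norm_smul, Real.norm_eq_abs]
                refine mul_le_mul_of_nonneg_left ?_ (abs_nonneg _)
                refine le_trans (hSle _ h0 hTT _) (mul_le_mul_of_nonneg_left ?_ hC₀pos.le)
                exact le_trans (B.le_opNorm _)
                  (mul_le_mul_of_nonneg_left (hYpbound s ⟨hs.1.le, hs.2⟩) (norm_nonneg _))
              · exact le_trans (hSle _ h0 hTT _)
                  (mul_le_mul_of_nonneg_left (hKnorm _ _ (hYpbound s ⟨hs.1.le, hs.2⟩)) hC₀pos.le)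
            · rw [Set.indicator_of_notMem hmem, norm_zero]
              have : (0:ℝ) ≤ Rp := le_trans (norm_nonneg _) (hYpbound 0 ⟨le_rfl, hT.le⟩)
              positivity
          · have hne : ∀ᵐ s : ℝ, s ≠ t₀ := by
              rw [ae_iff]
              have h5 : {s : ℝ | ¬ s ≠ t₀} = {t₀} := by ext s; simp
              rw [h5]; exact measure_singleton t₀
            filter_upwards [ae_restrict_of_ae hne, ae_restrict_mem measurableSet_Ioc]
              with s hsne hsmem
            have hGcont : Tendsto (fun t' => G t' s) (nhdsWithin t₀ (Icc 0 T)) (nhds (G t₀ s)) := by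
              have hcontG : Continuous (fun t' => G t' s) := by
                simp only [hGdef]
                have c1 : Continuous fun t' : ℝ => S (max (t' - s) 0) (B (Y p s)) :=
                  hFcont.comp ((continuous_id.sub continuous_const).prodMk continuous_const)
                have c2 : Continuous fun t' : ℝ => S (max (t' - s) 0) (K (Y p s)) :=
                  hFcont.comp ((continuous_id.sub continuous_const).prodMk continuous_const)
                exact (continuous_const.smul c1).add c2
              exact (hcontG.tendsto t₀).mono_left nhdsWithin_le_nhds
            rcases hsne.lt_or_gt with hlt | hgt
            · have hev : ∀ᶠ t' in nhdsWithin t₀ (Icc 0 T), s < t' :=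
                (eventually_gt_nhds hlt).filter_mono nhdsWithin_le_nhds
              have heq : (Ioc (0:ℝ) t₀).indicator (G t₀) s = G t₀ s :=
                Set.indicator_of_mem (show s ∈ Ioc (0:ℝ) t₀ from ⟨hsmem.1, hlt.le⟩) _
              rw [heq]
              refine Tendsto.congr' ?_ hGcont
              filter_upwards [hev] with t' hst'
              exact (Set.indicator_of_mem (show s ∈ Ioc (0:ℝ) t' from ⟨hsmem.1, hst'.le⟩) _).symm
            · have hev : ∀ᶠ t' in nhdsWithin t₀ (Icc 0 T), t' < s :=
                (eventually_lt_nhds hgt).filter_mono nhdsWithin_le_nhds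
              have heq : (Ioc (0:ℝ) t₀).indicator (G t₀) s = 0 :=
                Set.indicator_of_notMem (fun hmem => absurd hmem.2 (not_le.2 hgt)) _
              rw [heq]
              refine Tendsto.congr' ?_ tendsto_const_nhds
              filter_upwards [hev] with t' hst'
              exact (Set.indicator_of_notMem (fun hmem => absurd hmem.2 (not_le.2 hst')) _).symm
        have hS0cont : Tendsto (fun t' : ℝ => S (max t' 0) ψ₀) (nhdsWithin t₀ (Icc 0 T))
            (nhds (S (max t₀ 0) ψ₀)) := by
          have hc : Continuous fun t' : ℝ => S (max t' 0) ψ₀ :=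
            hFcont.comp (continuous_id.prodMk continuous_const)
          exact (hc.tendsto t₀).mono_left nhdsWithin_le_nhds
        have htot := hS0cont.add hIlim
        show Tendsto (Y (p+1)) (nhdsWithin t₀ (Icc 0 T)) (nhds (Y (p+1) t₀))
        rw [hrepr t₀ ht₀]
        refine Tendsto.congr' ?_ htot
        filter_upwards [self_mem_nhdsWithin] with t' ht'
        exact (hrepr t' ht').symm
      refine ⟨(hYcont.aestronglyMeasurable measurableSet_Icc).mono_measure
        (Measure.restrict_mono Ioc_subset_Icc_self le_rfl), ?_⟩
      -- the quantitative estimate for `Y (p+1)`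
      intro j t' ht' htj
      cases j with
      | zero =>
        have ht0 : t' = 0 := le_antisymm (by simpa using htj) ht'.1
        subst ht0
        have hY1 : Y (p+1) 0 = ψ₀ := by
          rw [hYrec p 0 le_rfl, intervalIntegral.integral_same, hS0]
          simp
        have hΦ0 : Φ 0 = ψ₀ := by
          have h6 := hΦ 0 ⟨le_rfl, hT.le⟩
          rw [intervalIntegral.integral_same, intervalIntegral.integral_same, hS0] at h6
          simpa using h6
        rw [hY1, hΦ0, sub_self, norm_zero]
        simp only [pow_zero, mul_one, one_mul]
        exact mul_nonneg hCb0 (by positivity)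
      | succ j =>
        have ht'0 : 0 ≤ t' := ht'.1
        have ht'T : t' ≤ T := ht'.2
        set τ : ℝ := min ((j:ℝ) * δ') t' with hτdef
        have hτ0 : 0 ≤ τ := le_min (by positivity) ht'0
        have hττ' : τ ≤ t' := min_le_right _ _
        have hsubτ : Ioc (0:ℝ) τ ⊆ Ioc (0:ℝ) t' := Ioc_subset_Ioc_right hττ'
        have hsub2 : Ioc τ t' ⊆ Ioc (0:ℝ) t' := Ioc_subset_Ioc_left hτ0
        have hg1 : IntegrableOn (fun s => u s • S (t' - s) (B (Y p s))) (Ioc 0 t') :=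
          hIntB t' ht' (Y p) Rp hmeas hYpbound
        have hg2 : IntegrableOn (fun s => S (t' - s) (K (Y p s))) (Ioc 0 t') :=
          hIntK t' ht' (Y p) Rp hmeas hYpbound
        have hf1 : IntegrableOn (fun s => u s • S (t' - s) (B (Φ s))) (Ioc 0 t') :=
          hIntB t' ht' Φ Cb hΦmeas hCb
        have hf2 : IntegrableOn (fun s => S (t' - s) (K (Φ s))) (Ioc 0 t') :=
          hIntK t' ht' Φ Cb hΦmeas hCb
        have hg1' : IntervalIntegrable (fun s => u s • S (t' - s) (B (Y p s))) volume 0 t' :=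
          (intervalIntegrable_iff_integrableOn_Ioc_of_le ht'0).2 hg1
        have hg2' : IntervalIntegrable (fun s => S (t' - s) (K (Y p s))) volume 0 t' :=
          (intervalIntegrable_iff_integrableOn_Ioc_of_le ht'0).2 hg2
        have hf1' : IntervalIntegrable (fun s => u s • S (t' - s) (B (Φ s))) volume 0 t' :=
          (intervalIntegrable_iff_integrableOn_Ioc_of_le ht'0).2 hf1
        have hf2' : IntervalIntegrable (fun s => S (t' - s) (K (Φ s))) volume 0 t' :=
          (intervalIntegrable_iff_integrableOn_Ioc_of_le ht'0).2 hf2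
        have key1 : ∫ s in (0:ℝ)..t',
            ((u s • S (t' - s) (B (Y p s)) - u s • S (t' - s) (B (Φ s)))
             + (S (t' - s) (K (Y p s)) - S (t' - s) (K (Φ s))))
          = (∫ s in (0:ℝ)..t', (u s • S (t' - s) (B (Y p s)) + S (t' - s) (K (Y p s))))
            - (∫ s in (0:ℝ)..t', u s • S (t' - s) (B (Φ s)))
            - (∫ s in (0:ℝ)..t', S (t' - s) (K (Φ s))) := by
          rw [intervalIntegral.integral_add (hg1'.sub hf1') (hg2'.sub hf2'),
            intervalIntegral.integral_sub hg1' hf1', intervalIntegral.integral_sub hg2' hf2',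
            intervalIntegral.integral_add hg1' hg2']
          abel
        have hdiff : Y (p+1) t' - Φ t' = ∫ s in Ioc (0:ℝ) t',
            ((u s • S (t' - s) (B (Y p s)) - u s • S (t' - s) (B (Φ s)))
             + (S (t' - s) (K (Y p s)) - S (t' - s) (K (Φ s)))) := by
          rw [← intervalIntegral.integral_of_le ht'0, key1, hYrec p t' ht'0, hΦ t' ht']
          abel
        have hDbound : ∀ s ∈ Ioc (0:ℝ) t',
            ‖(u s • S (t' - s) (B (Y p s)) - u s • S (t' - s) (B (Φ s)))
             + (S (t' - s) (K (Y p s)) - S (t' - s) (K (Φ s)))‖ ≤ L s * ‖Y p s - Φ s‖ := by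
          intro s hs
          have h0s : 0 ≤ t' - s := by linarith [hs.2]
          have hsT : t' - s ≤ T := by linarith [hs.1]
          have e1 : u s • S (t' - s) (B (Y p s)) - u s • S (t' - s) (B (Φ s))
              = u s • S (t' - s) (B (Y p s - Φ s)) := by
            rw [← smul_sub, ← map_sub, ← map_sub]
          have e2 : S (t' - s) (K (Y p s)) - S (t' - s) (K (Φ s))
              = S (t' - s) (K (Y p s) - K (Φ s)) := by rw [← map_sub]
          rw [e1, e2]
          refine le_trans (norm_add_le _ _) ?_
          have b1 : ‖u s • S (t' - s) (B (Y p s - Φ s))‖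
              ≤ |u s| * (C₀ * (‖B‖ * ‖Y p s - Φ s‖)) := by
            rw [norm_smul, Real.norm_eq_abs]
            refine mul_le_mul_of_nonneg_left ?_ (abs_nonneg _)
            exact le_trans (hSle _ h0s hsT _)
              (mul_le_mul_of_nonneg_left (B.le_opNorm _) hC₀pos.le)
          have b2 : ‖S (t' - s) (K (Y p s) - K (Φ s))‖ ≤ C₀ * ((k:ℝ) * ‖Y p s - Φ s‖) :=
            le_trans (hSle _ h0s hsT _)
              (mul_le_mul_of_nonneg_left (hK.norm_sub_le _ _) hC₀pos.le)
          calc ‖u s • S (t' - s) (B (Y p s - Φ s))‖ + ‖S (t' - s) (K (Y p s) - K (Φ s))‖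
              ≤ |u s| * (C₀ * (‖B‖ * ‖Y p s - Φ s‖)) + C₀ * ((k:ℝ) * ‖Y p s - Φ s‖) :=
                add_le_add b1 b2
            _ = L s * ‖Y p s - Φ s‖ := by simp only [hLdef]; ring
        set Ej : ℝ := Cb * c ^ j * ((p:ℝ) + 1) ^ j * (1/2:ℝ) ^ p with hEjdef
        set Ej1 : ℝ := Cb * c ^ (j+1) * ((p:ℝ) + 1) ^ (j+1) * (1/2:ℝ) ^ p with hEj1def
        have hEj0 : 0 ≤ Ej :=
          mul_nonneg (mul_nonneg (mul_nonneg hCb0 (pow_nonneg hc0 _))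
            (pow_nonneg (by positivity) _)) (by positivity)
        have hEj10 : 0 ≤ Ej1 :=
          mul_nonneg (mul_nonneg (mul_nonneg hCb0 (pow_nonneg hc0 _))
            (pow_nonneg (by positivity) _)) (by positivity)
        have hDind : IntegrableOn (fun s =>
            (u s • S (t' - s) (B (Y p s)) - u s • S (t' - s) (B (Φ s)))
             + (S (t' - s) (K (Y p s)) - S (t' - s) (K (Φ s)))) (Ioc 0 t') :=
          (hg1.sub hf1).add (hg2.sub hf2)
        have hbound1 : ∀ s ∈ Ioc (0:ℝ) τ,
            ‖(u s • S (t' - s) (B (Y p s)) - u s • S (t' - s) (B (Φ s)))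
             + (S (t' - s) (K (Y p s)) - S (t' - s) (K (Φ s)))‖ ≤ L s * Ej := by
          intro s hs
          have hsIcc : s ∈ Icc (0:ℝ) T := ⟨hs.1.le, (hs.2.trans hττ').trans ht'T⟩
          have h7 := hbd j s hsIcc (le_trans hs.2 (min_le_left _ _))
          exact le_trans (hDbound s (hsubτ hs)) (mul_le_mul_of_nonneg_left h7 (hLnonneg s))
        have hbound2 : ∀ s ∈ Ioc τ t',
            ‖(u s • S (t' - s) (B (Y p s)) - u s • S (t' - s) (B (Φ s)))
             + (S (t' - s) (K (Y p s)) - S (t' - s) (K (Φ s)))‖ ≤ L s * Ej1 := by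
          intro s hs
          have hsIcc : s ∈ Icc (0:ℝ) T := ⟨hτ0.trans hs.1.le, hs.2.trans ht'T⟩
          have h7 := hbd (j+1) s hsIcc (le_trans hs.2 htj)
          exact le_trans (hDbound s (hsub2 hs)) (mul_le_mul_of_nonneg_left h7 (hLnonneg s))
        have hIτ : IntegrableOn (fun s =>
            (u s • S (t' - s) (B (Y p s)) - u s • S (t' - s) (B (Φ s)))
             + (S (t' - s) (K (Y p s)) - S (t' - s) (K (Φ s)))) (Ioc 0 τ) :=
          hDind.mono_set hsubτ
        have hIτ2 : IntegrableOn (fun s =>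
            (u s • S (t' - s) (B (Y p s)) - u s • S (t' - s) (B (Φ s)))
             + (S (t' - s) (K (Y p s)) - S (t' - s) (K (Φ s)))) (Ioc τ t') :=
          hDind.mono_set hsub2
        have hsplitInt : (∫ s in Ioc (0:ℝ) t',
            ((u s • S (t' - s) (B (Y p s)) - u s • S (t' - s) (B (Φ s)))
             + (S (t' - s) (K (Y p s)) - S (t' - s) (K (Φ s)))))
          = (∫ s in Ioc (0:ℝ) τ,
            ((u s • S (t' - s) (B (Y p s)) - u s • S (t' - s) (B (Φ s)))
             + (S (t' - s) (K (Y p s)) - S (t' - s) (K (Φ s)))))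
          + ∫ s in Ioc τ t',
            ((u s • S (t' - s) (B (Y p s)) - u s • S (t' - s) (B (Φ s)))
             + (S (t' - s) (K (Y p s)) - S (t' - s) (K (Φ s)))) := by
          rw [← Set.Ioc_union_Ioc_eq_Ioc hτ0 hττ',
            MeasureTheory.setIntegral_union (Set.Ioc_disjoint_Ioc_of_le le_rfl) measurableSet_Ioc hIτ hIτ2]
        have hLIocT : IntegrableOn L (Ioc 0 T) := hLint.mono_set Ioc_subset_Icc_self
        have hn1 : ‖∫ s in Ioc (0:ℝ) τ,
            ((u s • S (t' - s) (B (Y p s)) - u s • S (t' - s) (B (Φ s)))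
             + (S (t' - s) (K (Y p s)) - S (t' - s) (K (Φ s))))‖ ≤ A * Ej := by
          refine le_trans (norm_integral_le_integral_norm _) ?_
          have h1 : (∫ s in Ioc (0:ℝ) τ, ‖(u s • S (t' - s) (B (Y p s)) - u s • S (t' - s) (B (Φ s)))
               + (S (t' - s) (K (Y p s)) - S (t' - s) (K (Φ s)))‖)
              ≤ ∫ s in Ioc (0:ℝ) τ, L s * Ej :=
            setIntegral_mono_on hIτ.norm
              ((hLint.mono_set (hIocIcc τ (hττ'.trans ht'T))).mul_const _)
              measurableSet_Ioc hbound1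
          have h2 : (∫ s in Ioc (0:ℝ) τ, L s * Ej) = (∫ s in Ioc (0:ℝ) τ, L s) * Ej :=
            integral_mul_const _ _
          have h3 : (∫ s in Ioc (0:ℝ) τ, L s) ≤ A :=
            setIntegral_mono_set hLIocT (Filter.Eventually.of_forall hLnonneg)
              (HasSubset.Subset.eventuallyLE (Ioc_subset_Ioc_right (hττ'.trans ht'T)))
          calc _ ≤ (∫ s in Ioc (0:ℝ) τ, L s) * Ej := by rw [← h2]; exact h1
            _ ≤ A * Ej := mul_le_mul_of_nonneg_right h3 hEj0
        have hn2 : ‖∫ s in Ioc τ t',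
            ((u s • S (t' - s) (B (Y p s)) - u s • S (t' - s) (B (Φ s)))
             + (S (t' - s) (K (Y p s)) - S (t' - s) (K (Φ s))))‖ ≤ (1/2) * Ej1 := by
          refine le_trans (norm_integral_le_integral_norm _) ?_
          have h1 : (∫ s in Ioc τ t', ‖(u s • S (t' - s) (B (Y p s)) - u s • S (t' - s) (B (Φ s)))
               + (S (t' - s) (K (Y p s)) - S (t' - s) (K (Φ s)))‖)
              ≤ ∫ s in Ioc τ t', L s * Ej1 :=
            setIntegral_mono_on hIτ2.norm
              ((hLint.mono_set (fun s hs => ⟨hτ0.trans hs.1.le, hs.2.trans ht'T⟩)).mul_const _)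
              measurableSet_Ioc hbound2
          have hτδ : t' - τ < δ := by
            have h4 : t' - τ ≤ δ' := by
              rcases le_total ((j:ℝ) * δ') t' with h | h
              · rw [hτdef, min_eq_left h]
                have h5 : t' ≤ ((j:ℝ)+1) * δ' := by push_cast at htj; linarith
                linarith
              · rw [hτdef, min_eq_right h]; linarith
            linarith
          have h3 : (∫ s in Ioc τ t', L s) ≤ 1/2 := hchunk τ t' hτ0 hττ' ht'T hτδ
          have h2 : (∫ s in Ioc τ t', L s * Ej1) = (∫ s in Ioc τ t', L s) * Ej1 :=
            integral_mul_const _ _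
          calc _ ≤ (∫ s in Ioc τ t', L s) * Ej1 := by rw [← h2]; exact h1
            _ ≤ (1/2) * Ej1 := mul_le_mul_of_nonneg_right h3 hEj10
        have htotal : ‖Y (p+1) t' - Φ t'‖ ≤ A * Ej + (1/2) * Ej1 := by
          rw [hdiff, hsplitInt]
          exact le_trans (norm_add_le _ _) (add_le_add hn1 hn2)
        refine htotal.trans ?_
        push_cast
        set q : ℝ := (p:ℝ) + 1 with hqdef
        have hq0 : (0:ℝ) < q := by positivity
        have e2 : q ^ j ≤ (q+1) ^ j := pow_le_pow_left₀ hq0.le (by linarith) j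
        have key2 : 2*A*(Cb*c^j*q^j) ≤ Cb * c^(j+1) * q^j := by
          have hx : (0:ℝ) ≤ Cb*c^j*q^j :=
            mul_nonneg (mul_nonneg hCb0 (pow_nonneg hc0 _)) (pow_nonneg hq0.le _)
          calc 2*A*(Cb*c^j*q^j) = (Cb*c^j*q^j)*(2*A) := by ring
            _ ≤ (Cb*c^j*q^j)*c := mul_le_mul_of_nonneg_left hc2A hx
            _ = Cb*c^(j+1)*q^j := by rw [pow_succ]; ring
        have key3 : Cb*c^(j+1)*q^(j+1) + Cb*c^(j+1)*q^j ≤ Cb*c^(j+1)*(q+1)^(j+1) := by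
          have hy : (0:ℝ) ≤ Cb*c^(j+1) := mul_nonneg hCb0 (pow_nonneg hc0 _)
          calc Cb*c^(j+1)*q^(j+1) + Cb*c^(j+1)*q^j = Cb*c^(j+1)*(q^j*(q+1)) := by
                rw [pow_succ]; ring
            _ ≤ Cb*c^(j+1)*((q+1)^j*(q+1)) :=
                mul_le_mul_of_nonneg_left
                  (mul_le_mul_of_nonneg_right e2 (by linarith)) hy
            _ = Cb*c^(j+1)*(q+1)^(j+1) := by rw [pow_succ c j, pow_succ (q+1) j]
        have hr0 : (0:ℝ) ≤ (1/2:ℝ)^p * (1/2) := by positivity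
        have final := mul_le_mul_of_nonneg_right
          (show 2*A*(Cb*c^j*q^j) + Cb*c^(j+1)*q^(j+1) ≤ Cb*c^(j+1)*(q+1)^(j+1) by
            linarith) hr0
        calc A * Ej + (1/2) * Ej1
            = (2*A*(Cb*c^j*q^j) + Cb*c^(j+1)*q^(j+1)) * ((1/2:ℝ)^p*(1/2)) := by
              simp only [hEjdef, hEj1def]; ring
          _ ≤ Cb*c^(j+1)*(q+1)^(j+1) * ((1/2:ℝ)^p*(1/2)) := final
          _ = Cb * c^(j+1) * (q+1)^(j+1) * (1/2:ℝ)^(p+1) := by rw [pow_succ (1/2:ℝ) p]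
  -- conclusion
  intro t ht
  have hmaj : Summable (fun n : ℕ => Cb * c ^ N * ((n:ℝ) + 1) ^ N * (1/2:ℝ) ^ n) := by
    have h1 : Summable (fun n : ℕ => (n:ℝ) ^ N * (1/2:ℝ) ^ n) :=
      summable_pow_mul_geometric_of_norm_lt_one N (by rw [Real.norm_eq_abs, abs_of_pos (by norm_num : (0:ℝ) < 1/2)]; norm_num)
    have h2 : Summable (fun n : ℕ => ((n+1:ℕ):ℝ) ^ N * (1/2:ℝ) ^ (n+1)) :=
      (summable_nat_add_iff 1).2 h1
    refine (h2.mul_left (Cb * c ^ N * 2)).congr ?_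
    intro n
    push_cast
    ring
  have hbnd : ∀ n : ℕ, ‖Y n t - Φ t‖ ≤ Cb * c ^ N * ((n:ℝ) + 1) ^ N * (1/2:ℝ) ^ n :=
    fun n => (main n).2 N t ht (by rw [← hTN]; exact ht.2)
  have hzero : Tendsto (fun n => Y n t - Φ t) atTop (nhds 0) :=
    squeeze_zero_norm hbnd hmaj.tendsto_atTop_zero
  have hconv : Tendsto (fun n => Y n t) atTop (nhds (Φ t)) := by
    have h8 := hzero.add (tendsto_const_nhds (x := Φ t))
    simpa using h8
  have hsum : Summable (fun j : ℕ => Y (j + 1) t - Y j t) := by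
    refine Summable.of_norm_bounded
      (g := fun j => Cb * c ^ N * (((j:ℝ)+1) + 1) ^ N * (1/2:ℝ)^(j+1)
        + Cb * c ^ N * ((j:ℝ) + 1) ^ N * (1/2:ℝ)^j) ?_ ?_
    · refine Summable.add ?_ hmaj
      have h9 := (summable_nat_add_iff 1).2 hmaj
      refine h9.congr ?_
      intro n
      push_cast
      ring
    · intro j
      have h1 := hbnd (j+1)
      have h2 := hbnd j
      push_cast at h1
      have h3 : ‖Y (j+1) t - Y j t‖ ≤ ‖Y (j+1) t - Φ t‖ + ‖Y j t - Φ t‖ := by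
        have h4 := norm_sub_le (Y (j+1) t - Φ t) (Y j t - Φ t)
        have h5 : (Y (j+1) t - Φ t) - (Y j t - Φ t) = Y (j+1) t - Y j t := by abel
        rw [h5] at h4
        exact h4
      linarith
  obtain ⟨a, ha⟩ := hsum
  have h1 := ha.tendsto_sum_nat
  have h2 : ∀ n : ℕ, (∑ i ∈ Finset.range n, (Y (i+1) t - Y i t)) = Y n t := by
    intro n
    rw [Finset.sum_range_sub (fun i => Y i t), hY0 t, sub_zero]
  have haeq : a = Φ t := tendsto_nhds_unique (h1.congr h2) hconv
  exact haeq ▸ ha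
end

section
/- Assume K : 𝒳 → 𝒳 is merely continuous (not necessarily Lipschitz). For every j ∈ ℕ, every T ≥ 0, every L ≥ 0 and every ψ₀ ∈ 𝒳, the set 𝒴_j^{T,L} = { Y^j_t ψ₀ : 0 ≤ t ≤ T, u ∈ L¹([0,T];ℝ) with ‖u‖_{L¹([0,T])} ≤ L } is relatively compact in 𝒳. -/
open MeasureTheory Set Pointwise

/-- Joint continuity of `(t, x) ↦ S t x` on `Icc 0 T ×ˢ univ`, given strong continuity
and a uniform norm bound on `Icc 0 T`. -/
lemma semigroup_joint_continuousOn
    {X : Type*} [NormedAddCommGroup X] [NormedSpace ℝ X]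
    (S : ℝ → X →L[ℝ] X)
    (hScont : ∀ x : X, ContinuousOn (fun t => S t x) (Ici (0:ℝ)))
    (T C : ℝ) (hb : ∀ t ∈ Icc (0:ℝ) T, ‖S t‖ ≤ C) :
    ContinuousOn (fun p : ℝ × X => S p.1 p.2) (Icc (0:ℝ) T ×ˢ (univ : Set X)) := by
  intro p hp
  have hp1 : p.1 ∈ Icc (0:ℝ) T := hp.1
  have h1 : Filter.Tendsto (fun q : ℝ × X => S q.1 (q.2 - p.2))
      (nhdsWithin p (Icc (0:ℝ) T ×ˢ (univ : Set X))) (nhds 0) := by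
    apply squeeze_zero_norm'
    · filter_upwards [self_mem_nhdsWithin] with q hq
      calc ‖S q.1 (q.2 - p.2)‖ ≤ ‖S q.1‖ * ‖q.2 - p.2‖ := (S q.1).le_opNorm _
        _ ≤ C * ‖q.2 - p.2‖ :=
          mul_le_mul_of_nonneg_right (hb q.1 hq.1) (norm_nonneg _)
    · have hcont : Filter.Tendsto (fun q : ℝ × X => C * ‖q.2 - p.2‖) (nhds p)
          (nhds (C * ‖p.2 - p.2‖)) := by
        apply Filter.Tendsto.const_mul
        exact ((continuous_snd.sub continuous_const).norm).tendsto p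
      simp only [sub_self, norm_zero, mul_zero] at hcont
      exact hcont.mono_left nhdsWithin_le_nhds
  have h2 : Filter.Tendsto (fun q : ℝ × X => S q.1 p.2)
      (nhdsWithin p (Icc (0:ℝ) T ×ˢ (univ : Set X))) (nhds (S p.1 p.2)) := by
    have hfst : Filter.Tendsto (fun q : ℝ × X => q.1)
        (nhdsWithin p (Icc (0:ℝ) T ×ˢ (univ : Set X))) (nhdsWithin p.1 (Ici (0:ℝ))) := by
      apply tendsto_nhdsWithin_of_tendsto_nhds_of_eventually_within
      · exact (continuous_fst.tendsto p).mono_left nhdsWithin_le_nhds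
      · filter_upwards [self_mem_nhdsWithin] with q hq
        exact hq.1.1
    exact Filter.Tendsto.comp (hScont p.2 p.1 hp1.1) hfst
  have hsum := h1.add h2
  have heq : (fun q : ℝ × X => S q.1 (q.2 - p.2) + S q.1 p.2)
      = fun q : ℝ × X => S q.1 q.2 := by
    funext q; rw [map_sub, sub_add_cancel]
  rw [heq] at hsum
  simpa [ContinuousWithinAt] using hsum

/-- with `K` merely continuous, for every `j ∈ ℕ`, `T ≥ 0`, `L ≥ 0` and
`ψ₀ ∈ X`, the set `𝒴_j^{T,L} = { Y^j_t ψ₀ : 0 ≤ t ≤ T, ‖u‖_{L¹([0,T])} ≤ L }` is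
relatively compact in `X`. -/
theorem picard_iterate_set_relatively_compact
    {X : Type*} [NormedAddCommGroup X] [NormedSpace ℝ X] [CompleteSpace X]
    (S : ℝ → X →L[ℝ] X)
    (hS0 : S 0 = ContinuousLinearMap.id ℝ X)
    (hSadd : ∀ s t : ℝ, 0 ≤ s → 0 ≤ t → S (s + t) = (S s).comp (S t))
    (hScont : ∀ x : X, ContinuousOn (fun t => S t x) (Ici (0:ℝ)))
    (M ω : ℝ) (hM : 0 < M) (hω : 0 ≤ ω)
    (hSbound : ∀ t : ℝ, 0 ≤ t → ‖S t‖ ≤ M * Real.exp (ω * t))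
    (B : X →L[ℝ] X) (K : X → X) (hK : Continuous K)
    (ψ₀ : X)
    -- the Picard/Dyson iterates `Y u p t = Y^p_t ψ₀` for the control `u`
    (Y : (ℝ → ℝ) → ℕ → ℝ → X)
    (hY0 : ∀ u : ℝ → ℝ, ∀ t : ℝ, Y u 0 t = 0)
    (hYrec : ∀ u : ℝ → ℝ, ∀ p : ℕ, ∀ t : ℝ, 0 ≤ t →
      Y u (p + 1) t = S t ψ₀ + ∫ s in (0:ℝ)..t,
        (u s • S (t - s) (B (Y u p s)) + S (t - s) (K (Y u p s))))
    (j : ℕ) (T L : ℝ) (hT : 0 ≤ T) (hL : 0 ≤ L) :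
    IsCompact (closure { x : X | ∃ t ∈ Icc (0:ℝ) T, ∃ u : ℝ → ℝ,
      IntegrableOn u (Icc (0:ℝ) T) ∧ (∫ s in (0:ℝ)..T, |u s|) ≤ L ∧ x = Y u j t }) := by
  -- uniform bound on the semigroup on `[0, T]`
  set Cb : ℝ := M * Real.exp (ω * T) with hCb
  have hbd : ∀ r ∈ Icc (0:ℝ) T, ‖S r‖ ≤ Cb := by
    intro r hr
    refine (hSbound r hr.1).trans ?_
    exact mul_le_mul_of_nonneg_left
      (Real.exp_le_exp.mpr (mul_le_mul_of_nonneg_left hr.2 hω)) hM.le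
  have hjoint := semigroup_joint_continuousOn S hScont T Cb hbd
  suffices h : ∀ p : ℕ, ∃ C : Set X, IsCompact C ∧ ∀ u : ℝ → ℝ,
      IntegrableOn u (Icc (0:ℝ) T) → (∫ s in (0:ℝ)..T, |u s|) ≤ L →
      ∀ t ∈ Icc (0:ℝ) T, Y u p t ∈ C by
    obtain ⟨C, hC, hmem⟩ := h j
    refine hC.of_isClosed_subset isClosed_closure (closure_minimal ?_ hC.isClosed)
    rintro x ⟨t, ht, u, hu1, hu2, rfl⟩
    exact hmem u hu1 hu2 t ht
  intro p
  induction p with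
  | zero =>
    exact ⟨{0}, isCompact_singleton, fun u _ _ t _ => by simp [hY0]⟩
  | succ p ih =>
    obtain ⟨C, hC, hmem⟩ := ih
    -- the building blocks
    set P : Set X := (fun t => S t ψ₀) '' Icc (0:ℝ) T with hP_def
    have hP : IsCompact P :=
      isCompact_Icc.image_of_continuousOn ((hScont ψ₀).mono Icc_subset_Ici_self)
    set A : Set X := (fun q : ℝ × X => S q.1 (B q.2)) '' (Icc (0:ℝ) T ×ˢ C) with hA_def
    have hA : IsCompact A := by
      apply (isCompact_Icc.prod hC).image_of_continuousOn
      refine hjoint.comp ((continuous_fst.prodMk (B.continuous.comp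
        continuous_snd)).continuousOn) ?_
      intro q hq
      exact ⟨hq.1, mem_univ _⟩
    set Bc : Set X := (fun q : ℝ × X => S q.1 (K q.2)) '' (Icc (0:ℝ) T ×ˢ C) with hBc_def
    have hBc : IsCompact Bc := by
      apply (isCompact_Icc.prod hC).image_of_continuousOn
      refine hjoint.comp ((continuous_fst.prodMk (hK.comp
        continuous_snd)).continuousOn) ?_
      intro q hq
      exact ⟨hq.1, mem_univ _⟩
    set K₀ : Set X := closure (convexHull ℝ (A ∪ -A ∪ Bc ∪ {0})) with hK₀_def
    have hK₀ : IsCompact K₀ := by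
      apply TotallyBounded.isCompact_of_isClosed _ isClosed_closure
      apply TotallyBounded.closure
      apply totallyBounded_convexHull.mpr
      exact (((hA.union hA.neg).union hBc).union isCompact_singleton).totallyBounded
    have h0K₀ : (0:X) ∈ K₀ :=
      subset_closure (subset_convexHull _ _ (by simp))
    set Q : Set X := (fun q : ℝ × X => q.1 • q.2) '' (Icc (0:ℝ) (L + T) ×ˢ K₀) with hQ_def
    have hQ : IsCompact Q := (isCompact_Icc.prod hK₀).image continuous_smul
    have h0Q : (0:X) ∈ Q := by
      refine ⟨(0, 0), ⟨⟨le_refl _, show (0:ℝ) ≤ L + T by linarith⟩, h0K₀⟩, by simp⟩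
    refine ⟨P + Q, hP.add hQ, ?_⟩
    intro u hu1 hu2 t ht
    obtain ⟨ht0, htT⟩ := ht
    rw [hYrec u p t ht0]
    refine Set.add_mem_add ⟨t, ⟨ht0, htT⟩, rfl⟩ ?_
    set f : ℝ → X := fun s => u s • S (t - s) (B (Y u p s)) + S (t - s) (K (Y u p s))
      with hf_def
    by_cases hfi : IntervalIntegrable f volume 0 t
    swap
    · rw [intervalIntegral.integral_undef hfi]; exact h0Q
    rcases eq_or_lt_of_le ht0 with htz | htpos
    · rw [← htz, intervalIntegral.integral_same]; exact h0Q
    -- main case : `0 < t`, integrand integrable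
    have hfI : IntegrableOn f (Ioc 0 t) volume :=
      (intervalIntegrable_iff_integrableOn_Ioc_of_le ht0).mp hfi
    have hsub : Ioc (0:ℝ) t ⊆ Icc (0:ℝ) T := fun s hs => ⟨hs.1.le, hs.2.trans htT⟩
    have hu_t : IntegrableOn u (Ioc 0 t) volume := hu1.mono_set hsub
    have hu_T : IntegrableOn u (Ioc 0 T) volume :=
      hu1.mono_set Ioc_subset_Icc_self
    -- the density
    set d : ℝ → NNReal := fun s => (|u s| + 1).toNNReal with hd_def
    have hd_meas : AEMeasurable d (volume.restrict (Ioc 0 t)) := by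
      apply measurable_real_toNNReal.comp_aemeasurable
      exact ((continuous_abs.measurable.comp_aemeasurable hu_t.aemeasurable).add aemeasurable_const)
    set μ : Measure ℝ := (volume.restrict (Ioc 0 t)).withDensity
      (fun s => ((d s : NNReal) : ENNReal)) with hμ_def
    have hInt1 : IntegrableOn (fun s => |u s| + 1) (Ioc 0 t) volume := by
      refine hu_t.abs.add ?_
      exact integrableOn_const measure_Ioc_lt_top.ne
    have hcoe : ∀ s : ℝ, ((d s : NNReal) : ENNReal) = ENNReal.ofReal (|u s| + 1) :=
      fun s => rfl
    have hmass : μ univ = ENNReal.ofReal (∫ s in Ioc (0:ℝ) t, (|u s| + 1)) := by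
      rw [hμ_def, withDensity_apply _ MeasurableSet.univ, Measure.restrict_univ]
      rw [ofReal_integral_eq_lintegral_ofReal hInt1]
      · rfl
      · filter_upwards with s
        positivity
    have hsplit : (∫ s in Ioc (0:ℝ) t, (|u s| + 1))
        = (∫ s in Ioc (0:ℝ) t, |u s|) + t := by
      rw [integral_add hu_t.abs (integrableOn_const measure_Ioc_lt_top.ne)]
      congr 1
      simp [Real.volume_Ioc, ht0]
    have habs_le : (∫ s in Ioc (0:ℝ) t, |u s|) ≤ L := by
      have h1 : (∫ s in Ioc (0:ℝ) t, |u s|) ≤ ∫ s in Ioc (0:ℝ) T, |u s| := by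
        apply setIntegral_mono_set hu_T.abs
        · filter_upwards with s using abs_nonneg _
        · exact HasSubset.Subset.eventuallyLE (Ioc_subset_Ioc_right htT)
      have h2 : (∫ s in Ioc (0:ℝ) T, |u s|) = ∫ s in (0:ℝ)..T, |u s| :=
        (intervalIntegral.integral_of_le hT).symm
      linarith [hu2, h1, h2.le, h2.ge]
    have hmass_le : (∫ s in Ioc (0:ℝ) t, (|u s| + 1)) ≤ L + T := by
      rw [hsplit]; linarith
    have hmass_pos : 0 < ∫ s in Ioc (0:ℝ) t, (|u s| + 1) := by
      rw [hsplit]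
      have : (0:ℝ) ≤ ∫ s in Ioc (0:ℝ) t, |u s| :=
        setIntegral_nonneg measurableSet_Ioc fun s _ => abs_nonneg _
      linarith
    haveI hfin : IsFiniteMeasure μ := ⟨by rw [hmass]; exact ENNReal.ofReal_lt_top⟩
    haveI hne : NeZero μ := by
      refine ⟨Measure.measure_univ_ne_zero.mp ?_⟩
      rw [hmass]
      simp [ENNReal.ofReal_eq_zero, not_le, hmass_pos]
    set g : ℝ → X := fun s => (|u s| + 1)⁻¹ • f s with hg_def
    have hpos : ∀ s : ℝ, (0:ℝ) < |u s| + 1 := fun s => by positivity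
    have hdg : ∀ s : ℝ, d s • g s = f s := by
      intro s
      rw [hg_def]
      simp only [NNReal.smul_def, hd_def, Real.coe_toNNReal _ (hpos s).le, smul_smul,
        mul_inv_cancel₀ (hpos s).ne', one_smul]
    -- each value of `g` on `Ioc 0 t` lies in `K₀`
    have hgmem : ∀ s ∈ Ioc (0:ℝ) t, g s ∈ K₀ := by
      intro s hs
      have hsT : s ∈ Icc (0:ℝ) T := hsub hs
      have hYmem : Y u p s ∈ C := hmem u hu1 hu2 s hsT
      have htsT : t - s ∈ Icc (0:ℝ) T :=
        ⟨by linarith [hs.2], by linarith [hs.1, htT]⟩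
      set v : X := S (t - s) (B (Y u p s)) with hv_def
      set w : X := S (t - s) (K (Y u p s)) with hw_def
      have hvA : v ∈ A := ⟨(t - s, Y u p s), ⟨htsT, hYmem⟩, rfl⟩
      have hwB : w ∈ Bc := ⟨(t - s, Y u p s), ⟨htsT, hYmem⟩, rfl⟩
      set a : ℝ := u s with ha_def
      set c : ℝ := |a| + 1 with hc_def
      have hc : (0:ℝ) < c := hpos s
      have hwmem : w ∈ A ∪ -A ∪ Bc ∪ {0} := Or.inl (Or.inr hwB)
      have hfs : f s = a • v + w := rfl
      have hgs : g s = (c⁻¹ * a) • v + c⁻¹ • w := by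
        rw [hg_def]
        show (|u s| + 1)⁻¹ • f s = (c⁻¹ * a) • v + c⁻¹ • w
        rw [hfs, smul_add, smul_smul]
      have key : ∃ x ∈ A ∪ -A ∪ Bc ∪ {0}, g s = (|a| * c⁻¹) • x + c⁻¹ • w := by
        rcases le_or_gt 0 a with h | h
        · refine ⟨v, Or.inl (Or.inl (Or.inl hvA)), ?_⟩
          rw [hgs, abs_of_nonneg h, mul_comm]
        · refine ⟨-v, Or.inl (Or.inl (Or.inr (by simpa using hvA))), ?_⟩
          rw [hgs, abs_of_neg h, smul_neg, ← neg_smul, neg_mul, neg_neg, mul_comm]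
      obtain ⟨x, hxmem, hgeq⟩ := key
      have hclosed : g s ∈ convexHull ℝ (A ∪ -A ∪ Bc ∪ {0}) := by
        rw [hgeq]
        refine (convex_convexHull ℝ _) (subset_convexHull ℝ _ hxmem)
          (subset_convexHull ℝ _ hwmem) ?_ ?_ ?_
        · positivity
        · positivity
        · rw [hc_def]
          field_simp
      exact subset_closure hclosed
    -- integrability of `g` w.r.t. `μ` and the integral identity
    have hInt_g : Integrable g μ := by
      rw [hμ_def]
      rw [integrable_withDensity_iff_integrable_smul₀ hd_meas]
      have : (fun s => d s • g s) = f := funext hdg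
      rw [this]
      exact hfI
    have hint_eq : (∫ s, g s ∂μ) = ∫ s in Ioc (0:ℝ) t, f s := by
      rw [hμ_def, integral_withDensity_eq_integral_smul₀ hd_meas g]
      congr 1
      exact funext hdg
    -- the average lies in `K₀`
    have hconvK₀ : Convex ℝ K₀ := (convex_convexHull ℝ _).closure
    have hae : ∀ᵐ s ∂μ, g s ∈ K₀ := by
      have h1 : ∀ᵐ s ∂(volume.restrict (Ioc (0:ℝ) t)), g s ∈ K₀ :=
        ae_restrict_of_forall_mem measurableSet_Ioc hgmem
      exact (withDensity_absolutelyContinuous _ _).ae_le h1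
    have havg : (⨍ s, g s ∂μ) ∈ K₀ :=
      hconvK₀.average_mem isClosed_closure hae hInt_g
    -- put things together
    have hmassR : (μ univ).toReal = ∫ s in Ioc (0:ℝ) t, (|u s| + 1) := by
      rw [hmass, ENNReal.toReal_ofReal hmass_pos.le]
    have hIcc : (μ univ).toReal ∈ Icc (0:ℝ) (L + T) := by
      rw [hmassR]; exact ⟨hmass_pos.le, hmass_le⟩
    have hfinal : (∫ s in (0:ℝ)..t, f s) = (μ univ).toReal • ⨍ s, g s ∂μ := by
      rw [average_eq, smul_smul, measureReal_def, mul_inv_cancel₀, one_smul,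
        intervalIntegral.integral_of_le ht0, ← hint_eq]
      rw [hmassR]
      exact hmass_pos.ne'
    rw [hfinal]
    exact ⟨((μ univ).toReal, ⨍ s, g s ∂μ), ⟨hIcc, havg⟩, rfl⟩
end

section
/- Assume K : 𝒳 → 𝒳 is merely continuous (not necessarily Lipschitz). For every j ∈ ℕ, every T ≥ 0, every L ≥ 0 and every ψ₀ ∈ 𝒳, the set 𝒵_j^{T,L} = { Z^j_t ψ₀ : 0 ≤ t ≤ T, u ∈ L¹([0,T];ℝ) with ‖u‖_{L¹([0,T])} ≤ L } is relatively compact in 𝒳, where Z^j_t ψ₀ = Y^{j+1}_t ψ₀ − Y^j_t ψ₀. -/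
open MeasureTheory Set

section DysonAux
open Pointwise

lemma dysonAux_jointCont {X : Type*} [NormedAddCommGroup X] [NormedSpace ℝ X]
    (S : ℝ → X →L[ℝ] X) (T C : ℝ)
    (hScont : ∀ x : X, ContinuousOn (fun t => S t x) (Ici (0:ℝ)))
    (hC : ∀ t ∈ Icc (0:ℝ) T, ‖S t‖ ≤ C) :
    ContinuousOn (fun p : ℝ × X => S p.1 p.2) ((Icc (0:ℝ) T) ×ˢ (univ : Set X)) := by
  rintro ⟨τ₀, x₀⟩ ⟨hτ₀, -⟩
  have h1 : Filter.Tendsto (fun p : ℝ × X => S p.1 (p.2 - x₀))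
      (nhdsWithin (τ₀, x₀) ((Icc (0:ℝ) T) ×ˢ (univ : Set X))) (nhds 0) := by
    refine squeeze_zero_norm' (a := fun p : ℝ × X => C * ‖p.2 - x₀‖) ?_ ?_
    · filter_upwards [self_mem_nhdsWithin] with p hp
      calc ‖S p.1 (p.2 - x₀)‖ ≤ ‖S p.1‖ * ‖p.2 - x₀‖ := (S p.1).le_opNorm _
        _ ≤ C * ‖p.2 - x₀‖ := mul_le_mul_of_nonneg_right (hC p.1 hp.1) (norm_nonneg _)
    · have : Filter.Tendsto (fun p : ℝ × X => C * ‖p.2 - x₀‖)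
          (nhds (τ₀, x₀)) (nhds (C * ‖x₀ - x₀‖)) :=
        (continuous_const.mul ((continuous_snd.sub continuous_const).norm)).tendsto _
      simpa using this.mono_left nhdsWithin_le_nhds
  have h2 : Filter.Tendsto (fun p : ℝ × X => S p.1 x₀)
      (nhdsWithin (τ₀, x₀) ((Icc (0:ℝ) T) ×ˢ (univ : Set X))) (nhds (S τ₀ x₀)) := by
    have hcw : ContinuousWithinAt (fun t => S t x₀) (Icc (0:ℝ) T) τ₀ :=
      ((hScont x₀) τ₀ hτ₀.1).mono Icc_subset_Ici_self
    exact hcw.comp (show ContinuousWithinAt (fun p : ℝ × X => p.1)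
      ((Icc (0:ℝ) T) ×ˢ (univ : Set X)) (τ₀, x₀) from continuousWithinAt_fst) (fun p hp => hp.1)
  have heq : (fun p : ℝ × X => S p.1 p.2)
      = fun p : ℝ × X => S p.1 (p.2 - x₀) + S p.1 x₀ := by
    funext p; rw [← map_add]; simp
  rw [ContinuousWithinAt, heq]
  simpa using h1.add h2

lemma dysonAux_Yset_compact {X : Type*} [NormedAddCommGroup X] [NormedSpace ℝ X] [CompleteSpace X]
    (S : ℝ → X →L[ℝ] X)
    (hScont : ∀ x : X, ContinuousOn (fun t => S t x) (Ici (0:ℝ)))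
    (M ω : ℝ) (hω : 0 ≤ ω)
    (hSbound : ∀ t : ℝ, 0 ≤ t → ‖S t‖ ≤ M * Real.exp (ω * t))
    (B : X →L[ℝ] X) (K : X → X) (hK : Continuous K)
    (ψ₀ : X)
    (Y : (ℝ → ℝ) → ℕ → ℝ → X)
    (hY0 : ∀ u : ℝ → ℝ, ∀ t : ℝ, Y u 0 t = 0)
    (hYrec : ∀ u : ℝ → ℝ, ∀ p : ℕ, ∀ t : ℝ, 0 ≤ t →
      Y u (p + 1) t = S t ψ₀ + ∫ s in (0:ℝ)..t,
        (u s • S (t - s) (B (Y u p s)) + S (t - s) (K (Y u p s))))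
    (T L : ℝ) (hT : 0 ≤ T) (hL : 0 ≤ L) (p : ℕ) :
    IsCompact (closure { x : X | ∃ t ∈ Icc (0:ℝ) T, ∃ u : ℝ → ℝ,
      IntegrableOn u (Icc (0:ℝ) T) ∧ (∫ s in (0:ℝ)..T, |u s|) ≤ L ∧
      x = Y u p t }) := by
  induction p with
  | zero =>
    have hsub : { x : X | ∃ t ∈ Icc (0:ℝ) T, ∃ u : ℝ → ℝ,
        IntegrableOn u (Icc (0:ℝ) T) ∧ (∫ s in (0:ℝ)..T, |u s|) ≤ L ∧
        x = Y u 0 t } ⊆ {0} := by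
      rintro x ⟨t, ht, u, hu, huL, rfl⟩
      simp [hY0]
    exact isCompact_singleton.of_isClosed_subset isClosed_closure
      (closure_minimal hsub isClosed_singleton)
  | succ p ih =>
    set 𝒴 : Set X := { x : X | ∃ t ∈ Icc (0:ℝ) T, ∃ u : ℝ → ℝ,
      IntegrableOn u (Icc (0:ℝ) T) ∧ (∫ s in (0:ℝ)..T, |u s|) ≤ L ∧
      x = Y u p t } with h𝒴
    set Q : Set X := closure 𝒴 with hQdef
    have hQ : IsCompact Q := ih
    have h𝒴ne : 𝒴.Nonempty := by
      refine ⟨Y (fun _ => 0) p 0, 0, ⟨le_refl 0, hT⟩, fun _ => 0, ?_, ?_, rfl⟩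
      · exact integrableOn_zero
      · simpa using hL
    have hQne : Q.Nonempty := h𝒴ne.mono subset_closure
    obtain ⟨q₀, hq₀⟩ := hQne
    set C : ℝ := M * Real.exp (ω * T) with hCdef
    have hC : ∀ t ∈ Icc (0:ℝ) T, ‖S t‖ ≤ C := by
      intro t ht
      refine (hSbound t ht.1).trans ?_
      have h0M : 0 ≤ M := le_trans (norm_nonneg (S 0)) <| by
        simpa using hSbound 0 le_rfl
      have : Real.exp (ω * t) ≤ Real.exp (ω * T) :=
        Real.exp_le_exp.mpr (mul_le_mul_of_nonneg_left ht.2 hω)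
      exact mul_le_mul_of_nonneg_left this h0M
    have hJoint := dysonAux_jointCont S T C hScont hC
    -- compact building blocks
    set QB : Set X := (fun q : ℝ × X => S q.1 q.2) '' ((Icc (0:ℝ) T) ×ˢ (B '' Q)) with hQBdef
    have hQB : IsCompact QB :=
      ((isCompact_Icc.prod (hQ.image B.continuous)).image_of_continuousOn
        (hJoint.mono (prod_mono_right (subset_univ _))))
    have hQBne : QB.Nonempty :=
      ⟨S 0 (B q₀), ⟨(0, B q₀), ⟨⟨le_refl 0, hT⟩, mem_image_of_mem _ hq₀⟩, rfl⟩⟩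
    set QK : Set X := (fun q : ℝ × X => S q.1 q.2) '' ((Icc (0:ℝ) T) ×ˢ (K '' Q)) with hQKdef
    have hQK : IsCompact QK :=
      ((isCompact_Icc.prod (hQ.image hK)).image_of_continuousOn
        (hJoint.mono (prod_mono_right (subset_univ _))))
    have hQKne : QK.Nonempty :=
      ⟨S 0 (K q₀), ⟨(0, K q₀), ⟨⟨le_refl 0, hT⟩, mem_image_of_mem _ hq₀⟩, rfl⟩⟩
    set E₁ : Set X := L • (QB ∪ -QB) with hE₁def
    have hE₁ : IsCompact E₁ := (hQB.union hQB.neg).smul L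
    set E₂ : Set X := (T • QK) ∪ {0} with hE₂def
    have hE₂ : IsCompact E₂ := (hQK.smul T).union isCompact_singleton
    set E : Set X := E₁ + E₂ with hEdef
    have hE : IsCompact E := hE₁.add hE₂
    set D : Set X := closure (convexHull ℝ E) with hDdef
    have hD : IsCompact D :=
      TotallyBounded.isCompact_of_isClosed
        ((totallyBounded_convexHull.mpr hE.totallyBounded).closure) isClosed_closure
    have hDconv : Convex ℝ D := (convex_convexHull ℝ E).closure
    have hDclosed : IsClosed D := isClosed_closure
    obtain ⟨b₀, hb₀⟩ := hQBne
    have h0E₂ : (0 : X) ∈ E₂ := mem_union_right _ rfl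
    -- 0 ∈ D
    have h0D : (0 : X) ∈ D := by
      have hy : L • b₀ ∈ E₁ := smul_mem_smul_set (mem_union_left _ hb₀)
      have hy' : L • (-b₀) ∈ E₁ :=
        smul_mem_smul_set (mem_union_right _ (by simpa using hb₀))
      have hmem1 : L • b₀ + 0 ∈ convexHull ℝ E :=
        subset_convexHull ℝ E (add_mem_add hy h0E₂)
      have hmem2 : L • (-b₀) + 0 ∈ convexHull ℝ E :=
        subset_convexHull ℝ E (add_mem_add hy' h0E₂)
      have hmid := (convex_convexHull ℝ E) hmem1 hmem2
        (by norm_num : (0:ℝ) ≤ 1/2) (by norm_num : (0:ℝ) ≤ 1/2) (by norm_num)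
      refine subset_closure ?_
      have h0eq : (0 : X) = (1/2 : ℝ) • (L • b₀ + 0) + (1/2 : ℝ) • (L • (-b₀) + 0) := by
        module
      rw [h0eq]; exact hmid
    -- the target compact set
    set A₀ : Set X := (fun t => S t ψ₀) '' (Icc (0:ℝ) T) with hA₀def
    have hA₀ : IsCompact A₀ :=
      isCompact_Icc.image_of_continuousOn ((hScont ψ₀).mono Icc_subset_Ici_self)
    have hG : IsCompact (A₀ + D) := hA₀.add hD
    -- the main inclusion
    have hsub : { x : X | ∃ t ∈ Icc (0:ℝ) T, ∃ u : ℝ → ℝ,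
        IntegrableOn u (Icc (0:ℝ) T) ∧ (∫ s in (0:ℝ)..T, |u s|) ≤ L ∧
        x = Y u (p + 1) t } ⊆ A₀ + D := by
      rintro x ⟨t, ⟨ht0, htT⟩, u, hu, huL, rfl⟩
      rw [hYrec u p t ht0]
      refine add_mem_add ⟨t, ⟨ht0, htT⟩, rfl⟩ ?_
      set g : ℝ → X := fun s => u s • S (t - s) (B (Y u p s)) + S (t - s) (K (Y u p s)) with hgdef
      by_cases hgi : IntervalIntegrable g volume 0 t
      · -- integrable case : Hahn-Banach
        by_contra hvD
        obtain ⟨φ, c, hc1, hc2⟩ := geometric_hahn_banach_closed_point hDconv hDclosed hvD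
        obtain ⟨qB, hqB, hqBmax⟩ := hQB.exists_isMaxOn ⟨b₀, hb₀⟩
          ((continuous_abs.comp φ.continuous).continuousOn)
        obtain ⟨qK, hqK, hqKmax⟩ := hQK.exists_isMaxOn hQKne φ.continuous.continuousOn
        set m₁ : ℝ := |φ qB| with hm₁def
        set m₂ : ℝ := φ qK with hm₂def
        have hm₁0 : 0 ≤ m₁ := abs_nonneg _
        -- pointwise bound
        have hkey : ∀ s ∈ Icc (0:ℝ) t, φ (g s) ≤ |u s| * m₁ + max m₂ 0 := by
          intro s hs
          have hsT : s ∈ Icc (0:ℝ) T := ⟨hs.1, hs.2.trans htT⟩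
          have hYQ : Y u p s ∈ Q := subset_closure ⟨s, hsT, u, hu, huL, rfl⟩
          have htsmem : t - s ∈ Icc (0:ℝ) T :=
            ⟨sub_nonneg.mpr hs.2, by linarith [hs.1, htT]⟩
          have hb : S (t - s) (B (Y u p s)) ∈ QB :=
            ⟨(t - s, B (Y u p s)), ⟨htsmem, mem_image_of_mem _ hYQ⟩, rfl⟩
          have hk : S (t - s) (K (Y u p s)) ∈ QK :=
            ⟨(t - s, K (Y u p s)), ⟨htsmem, mem_image_of_mem _ hYQ⟩, rfl⟩
          have hφg : φ (g s) = u s * φ (S (t - s) (B (Y u p s)))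
              + φ (S (t - s) (K (Y u p s))) := by
            simp [hgdef, map_add, _root_.map_smul, smul_eq_mul]
          rw [hφg]
          have h1 : u s * φ (S (t - s) (B (Y u p s))) ≤ |u s| * m₁ := by
            calc u s * φ (S (t - s) (B (Y u p s)))
                ≤ |u s * φ (S (t - s) (B (Y u p s)))| := le_abs_self _
              _ = |u s| * |φ (S (t - s) (B (Y u p s)))| := abs_mul _ _
              _ ≤ |u s| * m₁ :=
                  mul_le_mul_of_nonneg_left (hqBmax hb) (abs_nonneg _)
          have h2 : φ (S (t - s) (K (Y u p s))) ≤ max m₂ 0 :=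
            (hqKmax hk).trans (le_max_left _ _)
          linarith
        -- integrabilities
        have hu_T : IntervalIntegrable u volume 0 T :=
          (intervalIntegrable_iff_integrableOn_Icc_of_le hT).mpr hu
        have hu_t : IntervalIntegrable u volume 0 t :=
          (intervalIntegrable_iff_integrableOn_Icc_of_le ht0).mpr
            (hu.mono_set (Icc_subset_Icc le_rfl htT))
        have hφg_int : IntervalIntegrable (fun s => φ (g s)) volume 0 t :=
          ⟨φ.integrable_comp hgi.1, φ.integrable_comp hgi.2⟩
        have hh_int : IntervalIntegrable (fun s => |u s| * m₁ + max m₂ 0) volume 0 t :=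
          (hu_t.abs.mul_const m₁).add intervalIntegrable_const
        have hφv : φ (∫ s in (0:ℝ)..t, g s) = ∫ s in (0:ℝ)..t, φ (g s) :=
          (φ.intervalIntegral_comp_comm hgi).symm
        have hb1 : φ (∫ s in (0:ℝ)..t, g s)
            ≤ ∫ s in (0:ℝ)..t, (|u s| * m₁ + max m₂ 0) := by
          rw [hφv]
          exact intervalIntegral.integral_mono_on ht0 hφg_int hh_int hkey
        have hb2 : (∫ s in (0:ℝ)..t, (|u s| * m₁ + max m₂ 0))
            = (∫ s in (0:ℝ)..t, |u s|) * m₁ + t * max m₂ 0 := by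
          rw [intervalIntegral.integral_add (hu_t.abs.mul_const m₁) intervalIntegrable_const,
            intervalIntegral.integral_mul_const, intervalIntegral.integral_const]
          simp [smul_eq_mul]
        have habs : (∫ s in (0:ℝ)..t, |u s|) ≤ L := by
          refine le_trans ?_ huL
          exact intervalIntegral.integral_mono_interval (le_refl (0:ℝ)) ht0 htT
            (Filter.Eventually.of_forall (fun s => abs_nonneg _)) hu_T.abs
        have hb3 : φ (∫ s in (0:ℝ)..t, g s) ≤ L * m₁ + T * max m₂ 0 := by
          have habs0 : 0 ≤ ∫ s in (0:ℝ)..t, |u s| :=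
            intervalIntegral.integral_nonneg ht0 (fun s _ => abs_nonneg _)
          have e1 : (∫ s in (0:ℝ)..t, |u s|) * m₁ ≤ L * m₁ :=
            mul_le_mul_of_nonneg_right habs hm₁0
          have e2 : t * max m₂ 0 ≤ T * max m₂ 0 :=
            mul_le_mul_of_nonneg_right htT (le_max_right _ _)
          calc φ (∫ s in (0:ℝ)..t, g s) ≤ _ := hb1
            _ = _ := hb2
            _ ≤ L * m₁ + T * max m₂ 0 := by linarith
        -- construct a point of E realizing the bound
        obtain ⟨e₁, he₁E, he₁φ⟩ : ∃ e₁ ∈ E₁, φ e₁ = L * m₁ := by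
          rcases le_or_gt 0 (φ qB) with h | h
          · refine ⟨L • qB, smul_mem_smul_set (mem_union_left _ hqB), ?_⟩
            rw [φ.map_smul, smul_eq_mul, hm₁def, abs_of_nonneg h]
          · refine ⟨L • (-qB), smul_mem_smul_set (mem_union_right _ (by simpa using hqB)), ?_⟩
            rw [φ.map_smul, smul_eq_mul, map_neg, hm₁def, abs_of_neg h]
        obtain ⟨e₂, he₂E, he₂φ⟩ : ∃ e₂ ∈ E₂, φ e₂ = T * max m₂ 0 := by
          rcases le_or_gt 0 m₂ with h | h
          · refine ⟨T • qK, mem_union_left _ (smul_mem_smul_set hqK), ?_⟩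
            rw [φ.map_smul, smul_eq_mul, max_eq_left h]
          · exact ⟨0, h0E₂, by rw [map_zero, max_eq_right h.le, mul_zero]⟩
        have heE : e₁ + e₂ ∈ D := subset_closure (subset_convexHull ℝ E (add_mem_add he₁E he₂E))
        have := hc1 _ heE
        rw [map_add, he₁φ, he₂φ] at this
        linarith [hb3, hc2]
      · -- non-integrable case : the integral is zero
        rw [intervalIntegral.integral_undef hgi]
        exact h0D
    exact hG.of_isClosed_subset isClosed_closure (closure_minimal hsub hG.isClosed)


end DysonAux

/-- with `K` merely continuous, for every `j ∈ ℕ`, `T ≥ 0`, `L ≥ 0` and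
`ψ₀ ∈ X`, the set `𝒵_j^{T,L} = { Z^j_t ψ₀ : 0 ≤ t ≤ T, ‖u‖_{L¹([0,T])} ≤ L }`, where
`Z^j_t ψ₀ = Y^{j+1}_t ψ₀ − Y^j_t ψ₀`, is relatively compact in `X`. -/
theorem dyson_increment_set_relatively_compact
    {X : Type*} [NormedAddCommGroup X] [NormedSpace ℝ X] [CompleteSpace X]
    (S : ℝ → X →L[ℝ] X)
    (hS0 : S 0 = ContinuousLinearMap.id ℝ X)
    (hSadd : ∀ s t : ℝ, 0 ≤ s → 0 ≤ t → S (s + t) = (S s).comp (S t))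
    (hScont : ∀ x : X, ContinuousOn (fun t => S t x) (Ici (0:ℝ)))
    (M ω : ℝ) (hM : 0 < M) (hω : 0 ≤ ω)
    (hSbound : ∀ t : ℝ, 0 ≤ t → ‖S t‖ ≤ M * Real.exp (ω * t))
    (B : X →L[ℝ] X) (K : X → X) (hK : Continuous K)
    (ψ₀ : X)
    -- the Picard/Dyson iterates `Y u p t = Y^p_t ψ₀` for the control `u`
    (Y : (ℝ → ℝ) → ℕ → ℝ → X)
    (hY0 : ∀ u : ℝ → ℝ, ∀ t : ℝ, Y u 0 t = 0)
    (hYrec : ∀ u : ℝ → ℝ, ∀ p : ℕ, ∀ t : ℝ, 0 ≤ t →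
      Y u (p + 1) t = S t ψ₀ + ∫ s in (0:ℝ)..t,
        (u s • S (t - s) (B (Y u p s)) + S (t - s) (K (Y u p s))))
    (j : ℕ) (T L : ℝ) (hT : 0 ≤ T) (hL : 0 ≤ L) :
    IsCompact (closure { x : X | ∃ t ∈ Icc (0:ℝ) T, ∃ u : ℝ → ℝ,
      IntegrableOn u (Icc (0:ℝ) T) ∧ (∫ s in (0:ℝ)..T, |u s|) ≤ L ∧
      x = Y u (j + 1) t - Y u j t }) := by
  have h1 := dysonAux_Yset_compact S hScont M ω hω hSbound B K hK ψ₀ Y hY0 hYrec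
    T L hT hL (j + 1)
  have h0 := dysonAux_Yset_compact S hScont M ω hω hSbound B K hK ψ₀ Y hY0 hYrec
    T L hT hL j
  have himg : IsCompact ((fun q : X × X => q.1 - q.2) ''
      ((closure { x : X | ∃ t ∈ Icc (0:ℝ) T, ∃ u : ℝ → ℝ,
        IntegrableOn u (Icc (0:ℝ) T) ∧ (∫ s in (0:ℝ)..T, |u s|) ≤ L ∧
        x = Y u (j + 1) t }) ×ˢ (closure { x : X | ∃ t ∈ Icc (0:ℝ) T, ∃ u : ℝ → ℝ,
        IntegrableOn u (Icc (0:ℝ) T) ∧ (∫ s in (0:ℝ)..T, |u s|) ≤ L ∧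
        x = Y u j t }))) :=
    (h1.prod h0).image (continuous_fst.sub continuous_snd)
  refine himg.of_isClosed_subset isClosed_closure (closure_minimal ?_ himg.isClosed)
  rintro x ⟨t, ht, u, hu, huL, rfl⟩
  exact ⟨(Y u (j + 1) t, Y u j t),
    ⟨subset_closure ⟨t, ht, u, hu, huL, rfl⟩, subset_closure ⟨t, ht, u, hu, huL, rfl⟩⟩, rfl⟩
end

section
/- Let 𝒳 be a real Banach space, C ⊆ 𝒳 a relatively compact set, and T, L > 0. Then the set of all vectors of the form ∫₀ᵗ u(s) g(s) ds, where t ∈ [0,T], u ∈ L¹([0,T];ℝ) with ‖u‖_{L¹([0,T])} ≤ L, and g : [0,T] → 𝒳 is continuous with g(s) ∈ C for all s, is relatively compact in 𝒳. -/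
open MeasureTheory Set
open scoped NNReal ENNReal

/-- if `C ⊆ X` is relatively compact and `T, L > 0`, then the set of all
vectors `∫₀ᵗ u(s) g(s) ds`, with `t ∈ [0,T]`, `u ∈ L¹([0,T]; ℝ)` such that
`‖u‖_{L¹([0,T])} ≤ L`, and `g : [0,T] → X` continuous with values in `C`, is relatively
compact in `X`. -/
theorem integral_image_relatively_compact
    {X : Type*} [NormedAddCommGroup X] [NormedSpace ℝ X] [CompleteSpace X]
    (C : Set X) (hC : IsCompact (closure C)) (T L : ℝ) (hT : 0 < T) (hL : 0 < L) :
    IsCompact (closure { x : X | ∃ t ∈ Icc (0:ℝ) T, ∃ u : ℝ → ℝ,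
      IntegrableOn u (Icc (0:ℝ) T) ∧ (∫ s in (0:ℝ)..T, |u s|) ≤ L ∧
      ∃ g : ℝ → X, ContinuousOn g (Icc (0:ℝ) T) ∧ (∀ s ∈ Icc (0:ℝ) T, g s ∈ C) ∧
      x = ∫ s in (0:ℝ)..t, u s • g s }) := by
  -- The symmetric compact "hull" base
  set B : Set X := closure C ∪ -closure C ∪ {0} with hBdef
  have hB : IsCompact B := (hC.union hC.neg).union isCompact_singleton
  set H : Set X := closure (convexHull ℝ B) with hHdef
  have hHcomp : IsCompact H :=
    TotallyBounded.isCompact_of_isClosed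
      (totallyBounded_convexHull.mpr hB.totallyBounded).closure isClosed_closure
  have hHconv : Convex ℝ H := (convex_convexHull ℝ B).closure
  have h0H : (0 : X) ∈ H :=
    subset_closure (subset_convexHull ℝ B (Or.inr rfl))
  -- The big compact set containing our set
  set D : Set X := (fun p : ℝ × X => p.1 • p.2) '' (Icc (0:ℝ) L ×ˢ H) with hDdef
  have hD : IsCompact D := ((isCompact_Icc).prod hHcomp).image continuous_smul
  refine hD.of_isClosed_subset isClosed_closure (closure_minimal ?_ hD.isClosed)
  rintro x ⟨t, ⟨ht0, htT⟩, u, hu, huL, g, hg, hgC, rfl⟩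
  have hIoc : Ioc (0:ℝ) t ⊆ Icc (0:ℝ) T := fun s hs => ⟨hs.1.le, hs.2.trans htT⟩
  have hIocT : Ioc (0:ℝ) t ⊆ Ioc (0:ℝ) T := fun s hs => ⟨hs.1, hs.2.trans htT⟩
  have huI : IntegrableOn u (Ioc 0 t) := hu.mono_set hIoc
  -- measurability and boundedness of g
  have hgm : AEStronglyMeasurable g (volume.restrict (Ioc 0 t)) :=
    (hg.aestronglyMeasurable measurableSet_Icc).mono_measure
      (Measure.restrict_mono hIoc le_rfl)
  obtain ⟨M, hM⟩ := hC.isBounded.exists_norm_le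
  have hgtop : MemLp g ⊤ (volume.restrict (Ioc 0 t)) := by
    refine memLp_top_of_bound hgm M ?_
    filter_upwards [ae_restrict_mem measurableSet_Ioc] with s hs
    exact hM _ (subset_closure (hgC s (hIoc hs)))
  have hfg : IntegrableOn (fun s => u s • g s) (Ioc 0 t) :=
    huI.smul_of_top_left hgtop
  -- the total variation `a`
  set a : ℝ := ∫ s in Ioc (0:ℝ) t, |u s| with hadef
  have ha0 : 0 ≤ a := setIntegral_nonneg measurableSet_Ioc fun _ _ => abs_nonneg _
  have haL : a ≤ L := by
    have h1 : a ≤ ∫ s in Ioc (0:ℝ) T, |u s| := by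
      have huabsT : IntegrableOn (fun s => |u s|) (Icc (0:ℝ) T) := hu.abs
      refine setIntegral_mono_set (huabsT.mono_set Ioc_subset_Icc_self) ?_ ?_
      · filter_upwards with s using abs_nonneg _
      · exact HasSubset.Subset.eventuallyLE hIocT
    have h2 : (∫ s in (0:ℝ)..T, |u s|) = ∫ s in Ioc (0:ℝ) T, |u s| :=
      intervalIntegral.integral_of_le hT.le
    linarith [huL, h1, h2 ▸ huL]
  have hxIoc : (∫ s in (0:ℝ)..t, u s • g s) = ∫ s in Ioc (0:ℝ) t, u s • g s :=
    intervalIntegral.integral_of_le ht0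
  rcases eq_or_lt_of_le ha0 with ha | ha
  · -- a = 0 : the integral is 0
    have hu0 : (fun s => |u s|) =ᵐ[volume.restrict (Ioc 0 t)] 0 :=
      (integral_eq_zero_iff_of_nonneg (fun s => abs_nonneg _) huI.abs).mp ha.symm
    have hx0 : (∫ s in Ioc (0:ℝ) t, u s • g s) = 0 := by
      refine integral_eq_zero_of_ae ?_
      filter_upwards [hu0] with s hs
      have : u s = 0 := abs_eq_zero.mp hs
      simp [this]
    exact ⟨(0, 0), ⟨⟨le_rfl, hL.le⟩, h0H⟩, by simp [hxIoc, hx0]⟩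
  · -- a > 0 : normalized measure argument
    have hane : a ≠ 0 := ne_of_gt ha
    -- density as an ℝ≥0-valued function
    set w : ℝ → ℝ≥0 := fun s => (a⁻¹ * |u s|).toNNReal with hwdef
    have huaem : AEMeasurable u (volume.restrict (Ioc 0 t)) :=
      huI.aemeasurable
    have hwm : AEMeasurable w (volume.restrict (Ioc 0 t)) :=
      measurable_real_toNNReal.comp_aemeasurable
        ((measurable_abs.comp_aemeasurable huaem).const_mul a⁻¹)
    set ν : Measure ℝ :=
      (volume.restrict (Ioc 0 t)).withDensity (fun s => (w s : ℝ≥0∞)) with hνdef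
    have hwcoe : ∀ s, ((w s : ℝ≥0) : ℝ) = a⁻¹ * |u s| := fun s =>
      Real.coe_toNNReal _ (mul_nonneg (inv_nonneg.mpr ha0) (abs_nonneg _))
    have hint1 : Integrable (fun s => a⁻¹ * |u s|) (volume.restrict (Ioc 0 t)) :=
      huI.abs.const_mul _
    have hνuniv : ν univ = 1 := by
      have h1 : ν univ = ∫⁻ s, (w s : ℝ≥0∞) ∂(volume.restrict (Ioc 0 t)) := by
        rw [hνdef, withDensity_apply _ MeasurableSet.univ, Measure.restrict_univ]
      have h2 : ∀ s, ((w s : ℝ≥0) : ℝ≥0∞) = ENNReal.ofReal (a⁻¹ * |u s|) := fun s => rfl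
      have h3 : (∫⁻ s, (w s : ℝ≥0∞) ∂(volume.restrict (Ioc 0 t)))
          = ENNReal.ofReal (∫ s in Ioc (0:ℝ) t, a⁻¹ * |u s|) := by
        rw [MeasureTheory.ofReal_integral_eq_lintegral_ofReal hint1
          (Filter.Eventually.of_forall fun s =>
            mul_nonneg (inv_nonneg.mpr ha0) (abs_nonneg _))]
        simp only [h2]
      have h4 : (∫ s in Ioc (0:ℝ) t, a⁻¹ * |u s|) = 1 := by
        rw [integral_const_mul, ← hadef, inv_mul_cancel₀ hane]
      rw [h1, h3, h4, ENNReal.ofReal_one]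
    haveI hνprob : IsProbabilityMeasure ν := ⟨hνuniv⟩
    -- the direction function
    set f : ℝ → X := fun s => Real.sign (u s) • g s with hfdef
    have hsign_smul : ∀ s, ((w s : ℝ≥0) : ℝ) • f s = a⁻¹ • (u s • g s) := by
      intro s
      have habs : |u s| * Real.sign (u s) = u s := by
        rcases lt_trichotomy (u s) 0 with h | h | h
        · rw [Real.sign_of_neg h, abs_of_neg h]; ring
        · simp [h, Real.sign_zero]
        · rw [Real.sign_of_pos h, abs_of_pos h]; ring
      rw [hwcoe, hfdef]
      rw [smul_smul, smul_smul]
      congr 1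
      rw [mul_assoc, habs]
    have hmemH : ∀ᵐ s ∂ν, f s ∈ H := by
      have habs : ν ≪ volume.restrict (Ioc 0 t) := withDensity_absolutelyContinuous _ _
      refine habs.ae_le ?_
      filter_upwards [ae_restrict_mem measurableSet_Ioc] with s hs
      have hgs : g s ∈ closure C := subset_closure (hgC s (hIoc hs))
      have hBH : B ⊆ H := (subset_convexHull ℝ B).trans subset_closure
      rcases lt_trichotomy (u s) 0 with h | h | h
      · rw [hfdef]; simp only [Real.sign_of_neg h, neg_smul, one_smul]
        exact hBH (Or.inl (Or.inr (by simpa using hgs)))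
      · rw [hfdef]; simp only [h, Real.sign_zero, zero_smul]; exact h0H
      · rw [hfdef]; simp only [Real.sign_of_pos h, one_smul]
        exact hBH (Or.inl (Or.inl hgs))
    have hfint : Integrable f ν := by
      rw [hνdef, integrable_withDensity_iff_integrable_smul₀ hwm]
      refine (hfg.smul a⁻¹).congr ?_
      filter_upwards with s
      exact (hsign_smul s).symm
    have hmean : (∫ s, f s ∂ν) ∈ H :=
      hHconv.integral_mem isClosed_closure hmemH hfint
    have hcalc : (∫ s, f s ∂ν) = a⁻¹ • ∫ s in Ioc (0:ℝ) t, u s • g s := by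
      rw [hνdef, integral_withDensity_eq_integral_smul₀ hwm]
      rw [← integral_smul]
      exact integral_congr_ae (Filter.Eventually.of_forall hsign_smul)
    refine ⟨(a, ∫ s, f s ∂ν), ⟨⟨ha0, haL⟩, hmean⟩, ?_⟩
    simp only [hcalc, hxIoc, smul_smul, mul_inv_cancel₀ hane, one_smul]
end

section
/- Let T > 0, u ∈ L¹([0,T];ℝ) and ψ₀ ∈ 𝒳. Every essentially bounded strongly measurable function ψ : [0,T] → 𝒳 that satisfies the Duhamel formula ψ(t) = T_t ψ₀ + ∫₀ᵗ u(s) T_{t−s} B ψ(s) ds + ∫₀ᵗ T_{t−s} K(ψ(s)) ds for every t ∈ [0,T] is continuous on [0,T]. -/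
open MeasureTheory Set Filter

theorem aux_cont_int {X : Type*} [NormedAddCommGroup X] [NormedSpace ℝ X]
    [CompleteSpace X]
    (Φ : ℝ → X →L[ℝ] X)
    (hΦcont : Continuous fun p : ℝ × X => Φ p.1 p.2)
    (C₁ : ℝ) (hΦb : ∀ r, ‖Φ r‖ ≤ C₁)
    (T : ℝ) (hT : 0 < T)
    (v : ℝ → ℝ) (hv : IntegrableOn v (Icc (0:ℝ) T))
    (g : ℝ → X) (hg : AEStronglyMeasurable g (volume.restrict (Icc (0:ℝ) T)))
    (C : ℝ) (hC : 0 ≤ C)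
    (hgC : ∀ᵐ s ∂(volume.restrict (Icc (0:ℝ) T)), ‖g s‖ ≤ C) :
    ContinuousOn (fun t => ∫ s in (0:ℝ)..t, v s • Φ (t - s) (g s))
      (Icc (0:ℝ) T) := by
  have hC₁ : 0 ≤ C₁ := le_trans (norm_nonneg _) (hΦb 0)
  set H : ℝ → ℝ → X :=
    fun t s => (Ioc (0:ℝ) t).indicator (fun s => v s • Φ (t - s) (g s)) s with hH
  have key : ∀ t ∈ Icc (0:ℝ) T,
      (∫ s in (0:ℝ)..t, v s • Φ (t - s) (g s)) = ∫ s in Icc (0:ℝ) T, H t s := by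
    intro t ht
    rw [intervalIntegral.integral_of_le ht.1, hH]
    rw [setIntegral_indicator measurableSet_Ioc]
    congr 1
    rw [Set.inter_eq_right.mpr (Set.Ioc_subset_Icc_self.trans
      (Set.Icc_subset_Icc_right ht.2))]
  intro t₀ ht₀
  have hmem : ∀ᶠ t in nhdsWithin t₀ (Icc (0:ℝ) T), t ∈ Icc (0:ℝ) T :=
    eventually_mem_nhdsWithin
  unfold ContinuousWithinAt
  beta_reduce
  rw [key t₀ ht₀]
  apply Filter.Tendsto.congr' (hmem.mono fun t ht => (key t ht).symm)
  apply tendsto_integral_filter_of_dominated_convergence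
    (fun s => C₁ * C * |v s|)
  · refine Filter.Eventually.of_forall fun t => ?_
    refine AEStronglyMeasurable.indicator ?_ measurableSet_Ioc
    refine hv.aestronglyMeasurable.smul ?_
    exact hΦcont.comp_aestronglyMeasurable
      (((continuous_const.sub continuous_id).aestronglyMeasurable).prodMk hg)
  · refine Filter.Eventually.of_forall fun t => hgC.mono fun s hs => ?_
    by_cases h : s ∈ Ioc (0:ℝ) t
    · rw [hH]
      simp only [Set.indicator_of_mem h]
      rw [norm_smul]
      have h1 : ‖Φ (t - s) (g s)‖ ≤ C₁ * C :=
        le_trans ((Φ (t - s)).le_opNorm _)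
          (mul_le_mul (hΦb _) hs (norm_nonneg _) hC₁)
      calc ‖v s‖ * ‖Φ (t - s) (g s)‖ ≤ ‖v s‖ * (C₁ * C) :=
            mul_le_mul_of_nonneg_left h1 (norm_nonneg _)
        _ = C₁ * C * |v s| := by rw [Real.norm_eq_abs]; ring
    · rw [hH]
      simp only [Set.indicator_of_notMem h, norm_zero]
      positivity
  · have : Integrable (fun s => C₁ * C * ‖v s‖)
        (volume.restrict (Icc (0:ℝ) T)) := hv.norm.const_mul _
    simpa [Real.norm_eq_abs] using this
  · have hne : ∀ᵐ (s : ℝ), s ≠ t₀ := by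
      rw [ae_iff]
      have : {a : ℝ | ¬ a ≠ t₀} = {t₀} := by ext a; simp
      rw [this]
      exact measure_singleton t₀
    have hne0 : ∀ᵐ (s : ℝ), s ≠ (0:ℝ) := by
      rw [ae_iff]
      have : {a : ℝ | ¬ a ≠ (0:ℝ)} = {(0:ℝ)} := by ext a; simp
      rw [this]
      exact measure_singleton 0
    filter_upwards [ae_restrict_mem measurableSet_Icc, ae_restrict_of_ae hne,
      ae_restrict_of_ae hne0] with s hsIcc hsne hs0
    have hs0' : 0 < s := lt_of_le_of_ne hsIcc.1 (Ne.symm hs0)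
    rcases lt_or_gt_of_ne hsne with hlt | hgt
    · -- s < t₀
      have hev : ∀ᶠ t in nhdsWithin t₀ (Icc (0:ℝ) T), s < t :=
        (eventually_gt_nhds hlt).filter_mono nhdsWithin_le_nhds
      have hev' : ∀ᶠ t in nhdsWithin t₀ (Icc (0:ℝ) T),
          (fun t => v s • Φ (t - s) (g s)) t = H t s :=
        hev.mono fun t ht => by
          have hmem' : s ∈ Ioc (0:ℝ) t := ⟨hs0', ht.le⟩
          simp [hH, Set.indicator_of_mem hmem']
      have h0 : H t₀ s = v s • Φ (t₀ - s) (g s) := by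
        have hmem' : s ∈ Ioc (0:ℝ) t₀ := ⟨hs0', hlt.le⟩
        simp [hH, Set.indicator_of_mem hmem']
      rw [h0]
      refine Filter.Tendsto.congr' hev' ?_
      have hc : Continuous fun t : ℝ => Φ (t - s) (g s) :=
        hΦcont.comp ((continuous_id.sub continuous_const).prodMk continuous_const)
      exact ((hc.tendsto t₀).const_smul (v s)).mono_left nhdsWithin_le_nhds
    · -- t₀ < s
      have hev : ∀ᶠ t in nhdsWithin t₀ (Icc (0:ℝ) T), t < s :=
        (eventually_lt_nhds hgt).filter_mono nhdsWithin_le_nhds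
      have hev' : ∀ᶠ t in nhdsWithin t₀ (Icc (0:ℝ) T),
          (fun _ => (0:X)) t = H t s :=
        hev.mono fun t ht =>
          (Set.indicator_of_notMem (fun hmem => absurd hmem.2 (not_le.2 ht)) _).symm
      have h0 : H t₀ s = 0 :=
        Set.indicator_of_notMem (fun hmem => absurd hmem.2 (not_le.2 hgt)) _
      rw [h0]
      exact Filter.Tendsto.congr' hev' tendsto_const_nhds

/-- every essentially bounded, strongly measurable function
`ψ : [0,T] → X` satisfying the Duhamel formula
`ψ(t) = S_t ψ₀ + ∫₀ᵗ u(s) S_{t-s} B ψ(s) ds + ∫₀ᵗ S_{t-s} K(ψ(s)) ds` for every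
`t ∈ [0,T]` is continuous on `[0,T]`. -/
theorem mildSolution_continuous
    {X : Type*} [NormedAddCommGroup X] [NormedSpace ℝ X] [CompleteSpace X]
    (S : ℝ → X →L[ℝ] X)
    (hS0 : S 0 = ContinuousLinearMap.id ℝ X)
    (hSadd : ∀ s t : ℝ, 0 ≤ s → 0 ≤ t → S (s + t) = (S s).comp (S t))
    (hScont : ∀ x : X, ContinuousOn (fun t => S t x) (Ici (0:ℝ)))
    (M ω : ℝ) (hM : 0 < M) (hω : 0 ≤ ω)
    (hSbound : ∀ t : ℝ, 0 ≤ t → ‖S t‖ ≤ M * Real.exp (ω * t))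
    (B : X →L[ℝ] X) (K : X → X) (k : NNReal) (hk : 0 < k) (hK : LipschitzWith k K)
    (T : ℝ) (hT : 0 < T)
    (u : ℝ → ℝ) (hu : IntegrableOn u (Icc (0:ℝ) T))
    (ψ₀ : X) (ψ : ℝ → X)
    -- `ψ` is strongly measurable and essentially bounded on `[0, T]`
    (hmeas : AEStronglyMeasurable ψ (volume.restrict (Icc (0:ℝ) T)))
    (hbdd : ∃ Cb : ℝ, ∀ᵐ s ∂(volume.restrict (Icc (0:ℝ) T)), ‖ψ s‖ ≤ Cb)
    -- `ψ` satisfies the Duhamel formula on `[0, T]`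
    (hψ : ∀ t ∈ Icc (0:ℝ) T,
      ψ t = S t ψ₀ + (∫ s in (0:ℝ)..t, u s • S (t - s) (B (ψ s)))
          + (∫ s in (0:ℝ)..t, S (t - s) (K (ψ s)))) :
    ContinuousOn ψ (Icc (0:ℝ) T) := by
  -- clamped semigroup
  set Φ : ℝ → X →L[ℝ] X := fun r => S (min (max r 0) T) with hΦ
  set C₁ : ℝ := M * Real.exp (ω * T) with hC₁
  have hclamp : Continuous fun r : ℝ => min (max r 0) T := by continuity
  have hmemI : ∀ r : ℝ, min (max r 0) T ∈ Icc (0:ℝ) T :=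
    fun r => ⟨le_min (le_max_right _ _) hT.le, min_le_right _ _⟩
  have hΦb : ∀ r, ‖Φ r‖ ≤ C₁ := by
    intro r
    refine (hSbound _ (hmemI r).1).trans ?_
    have h1 : ω * min (max r 0) T ≤ ω * T :=
      mul_le_mul_of_nonneg_left (hmemI r).2 hω
    exact mul_le_mul_of_nonneg_left (Real.exp_le_exp.2 h1) hM.le
  have hΦcont : Continuous fun p : ℝ × X => Φ p.1 p.2 := by
    rw [continuous_iff_continuousAt]
    rintro ⟨r₀, x₀⟩
    have h2 : Continuous fun r : ℝ => Φ r x₀ :=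
      (hScont x₀).comp_continuous hclamp (fun r => (hmemI r).1)
    have h1 : Filter.Tendsto (fun p : ℝ × X => Φ p.1 (p.2 - x₀))
        (nhds (r₀, x₀)) (nhds 0) := by
      have h3 : Filter.Tendsto (fun p : ℝ × X => C₁ * ‖p.2 - x₀‖)
          (nhds (r₀, x₀)) (nhds 0) := by
        have h4 : Continuous fun p : ℝ × X => C₁ * ‖p.2 - x₀‖ :=
          continuous_const.mul ((continuous_snd.sub continuous_const).norm)
        simpa using h4.tendsto (r₀, x₀)
      exact squeeze_zero_norm (fun p => le_trans ((Φ p.1).le_opNorm _)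
        (mul_le_mul_of_nonneg_right (hΦb _) (norm_nonneg _))) h3
    have h5 : Filter.Tendsto (fun p : ℝ × X => Φ p.1 (p.2 - x₀) + Φ p.1 x₀)
        (nhds (r₀, x₀)) (nhds (0 + Φ r₀ x₀)) :=
      h1.add ((h2.tendsto r₀).comp (continuous_fst.tendsto (r₀, x₀)))
    rw [zero_add] at h5
    exact h5.congr fun p => by rw [← map_add]; congr 1; abel
  have hC₁0 : 0 ≤ C₁ := le_trans (norm_nonneg _) (hΦb 0)
  obtain ⟨Cb, hCb⟩ := hbdd
  set Cb' : ℝ := max Cb 0 with hCb'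
  have hCb'0 : 0 ≤ Cb' := le_max_right _ _
  have hψb : ∀ᵐ s ∂(volume.restrict (Icc (0:ℝ) T)), ‖ψ s‖ ≤ Cb' :=
    hCb.mono fun s h => h.trans (le_max_left _ _)
  -- continuity of the two integral terms (clamped version)
  have hcont2 := aux_cont_int Φ hΦcont C₁ hΦb T hT u hu (fun s => B (ψ s))
    (B.continuous.comp_aestronglyMeasurable hmeas) (‖B‖ * Cb')
    (by positivity)
    (hψb.mono fun s h =>
      (B.le_opNorm _).trans (mul_le_mul_of_nonneg_left h (norm_nonneg B)))
  have hKb : ∀ᵐ s ∂(volume.restrict (Icc (0:ℝ) T)),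
      ‖K (ψ s)‖ ≤ ‖K 0‖ + (k : ℝ) * Cb' := by
    refine hψb.mono fun s h => ?_
    have h1 := hK.dist_le_mul (ψ s) 0
    rw [dist_eq_norm, dist_eq_norm, sub_zero] at h1
    have h2 : ‖K (ψ s)‖ - ‖K 0‖ ≤ ‖K (ψ s) - K 0‖ := norm_sub_norm_le _ _
    have h3 : (k : ℝ) * ‖ψ s‖ ≤ (k : ℝ) * Cb' :=
      mul_le_mul_of_nonneg_left h k.coe_nonneg
    linarith
  have hcont3 := aux_cont_int Φ hΦcont C₁ hΦb T hT (fun _ => (1:ℝ))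
    ((integrableOn_const_iff (C := (1:ℝ))).2 (Or.inr measure_Icc_lt_top)) (fun s => K (ψ s))
    (hK.continuous.comp_aestronglyMeasurable hmeas) (‖K 0‖ + (k : ℝ) * Cb')
    (by positivity) hKb
  -- clamped integrands agree with the original ones on [0, T]
  have hΦeq : ∀ t ∈ Icc (0:ℝ) T, ∀ s ∈ Icc (0:ℝ) t, Φ (t - s) = S (t - s) := by
    intro t ht s hs
    have h1 : 0 ≤ t - s := sub_nonneg.2 hs.2
    have h2 : t - s ≤ T := by
      have := hs.1; have := ht.2; linarith
    rw [hΦ]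
    simp only [max_eq_left h1, min_eq_left h2]
  have e2 : ∀ t ∈ Icc (0:ℝ) T,
      (∫ s in (0:ℝ)..t, u s • S (t - s) (B (ψ s)))
        = ∫ s in (0:ℝ)..t, u s • Φ (t - s) (B (ψ s)) := by
    intro t ht
    apply intervalIntegral.integral_congr
    intro s hs
    rw [uIcc_of_le ht.1] at hs
    simp only [hΦeq t ht s hs]
  have e3 : ∀ t ∈ Icc (0:ℝ) T,
      (∫ s in (0:ℝ)..t, S (t - s) (K (ψ s)))
        = ∫ s in (0:ℝ)..t, (1:ℝ) • Φ (t - s) (K (ψ s)) := by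
    intro t ht
    apply intervalIntegral.integral_congr
    intro s hs
    rw [uIcc_of_le ht.1] at hs
    simp only [hΦeq t ht s hs, one_smul]
  have hc1 : ContinuousOn (fun t => S t ψ₀) (Icc (0:ℝ) T) :=
    (hScont ψ₀).mono fun x hx => hx.1
  have hrhs : ContinuousOn (fun t => S t ψ₀
      + (∫ s in (0:ℝ)..t, u s • S (t - s) (B (ψ s)))
      + (∫ s in (0:ℝ)..t, S (t - s) (K (ψ s)))) (Icc (0:ℝ) T) :=
    ((hc1.add (hcont2.congr e2)).add (hcont3.congr e3))
  exact hrhs.congr fun t ht => hψ t ht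
end
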